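/- arXiv:1302.4222 — 5 statements merged into one kernel-verified Lean document; each statement's English description precedes it below -/
import Mathlib

section
/- If a > b > 0, λ ∈ [0,1], and z is a complex number with |z| < b, then λ·Re(z/(a−z)) − Re(z/(b−z)) ≥ λ·|z|/(a−|z|) − |z|/(b−|z|). -/
private lemma keyD' (a b r x : ℝ) (hr0 : 0 ≤ r) (hrb : r < b) (hab : b < a) (hx : x ≤ r) :
    a*(a+r)*(b-r)*(b^2-2*b*x+r^2) ≤ b*(b+r)*(a-r)*(a^2-2*a*x+r^2) := by
  have hv : (0:ℝ) ≤ b - r := by linarith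
  have hw : (0:ℝ) ≤ a - b := by linarith
  have hrx : (0:ℝ) ≤ r - x := by linarith
  have ha0 : (0:ℝ) ≤ a := by linarith
  have hb0 : (0:ℝ) ≤ b := by linarith
  have h1 : 0 ≤ 4*a*b*r*(a-b)*(r-x) := by positivity
  nlinarith [mul_nonneg (pow_nonneg hv 2) (pow_nonneg hw 3),
    mul_nonneg (pow_nonneg hv 3) (pow_nonneg hw 2),
    mul_nonneg (pow_nonneg hv 4) hw,
    mul_nonneg (mul_nonneg hr0 hv) (pow_nonneg hw 3),
    mul_nonneg (mul_nonneg hr0 (pow_nonneg hv 2)) (pow_nonneg hw 2),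
    mul_nonneg (mul_nonneg hr0 (pow_nonneg hv 3)) hw,
    mul_nonneg (pow_nonneg hr0 2) (pow_nonneg hw 3),
    mul_nonneg (mul_nonneg (pow_nonneg hr0 2) hv) (pow_nonneg hw 2),
    mul_nonneg (mul_nonneg (pow_nonneg hr0 2) (pow_nonneg hv 2)) hw]

private lemma reDiv' (c : ℝ) (z : ℂ) :
    (z / ((c:ℂ) - z)).re = (c*z.re - ‖z‖^2) / ((c - z.re)^2 + z.im^2) := by
  have hsq : ‖z‖^2 = z.re^2 + z.im^2 := by
    rw [Complex.sq_norm, Complex.normSq_apply]; ring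
  rw [Complex.div_re, Complex.normSq_apply]
  simp only [Complex.sub_re, Complex.sub_im, Complex.ofReal_re, Complex.ofReal_im]
  rw [← add_div, hsq]
  rw [show (c - z.re)*(c - z.re) + (0 - z.im)*(0 - z.im) = (c - z.re)^2 + z.im^2 from by ring]
  congr 1
  ring

set_option maxHeartbeats 1000000 in
theorem stmt11 (a b lam : ℝ) (hb : 0 < b) (hab : b < a) (hlam0 : 0 ≤ lam) (hlam1 : lam ≤ 1)
    (z : ℂ) (hz : ‖z‖ < b) :
    lam * (‖z‖ / (a - ‖z‖)) - ‖z‖ / (b - ‖z‖) ≤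
      lam * (z / ((a : ℂ) - z)).re - (z / ((b : ℂ) - z)).re := by
  set r := ‖z‖ with hrdef
  set x := z.re
  set y := z.im
  have hr0 : 0 ≤ r := norm_nonneg z
  have hx : x ≤ r := le_trans (le_abs_self _) (Complex.abs_re_le_norm z)
  have hsq : x^2 + y^2 = r^2 := by
    rw [hrdef, Complex.sq_norm, Complex.normSq_apply]; ring
  have hra : r < a := lt_trans hz hab
  have hbx : 0 < b - x := by linarith
  have hax : 0 < a - x := by linarith
  have hbr : 0 < b - r := by linarith
  have har : 0 < a - r := by linarith
  have hSa : 0 < (a - x)^2 + y^2 := by positivity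
  have hSb : 0 < (b - x)^2 + y^2 := by positivity
  rw [reDiv' a z, reDiv' b z]
  -- substitute y^2 = r^2 - x^2 inside the denominators
  have hSa' : (a - x)^2 + y^2 = a^2 - 2*a*x + r^2 := by nlinarith [hsq]
  have hSb' : (b - x)^2 + y^2 = b^2 - 2*b*x + r^2 := by nlinarith [hsq]
  rw [hSa', hSb']
  have hSa2 : 0 < a^2 - 2*a*x + r^2 := by rw [← hSa']; exact hSa
  have hSb2 : 0 < b^2 - 2*b*x + r^2 := by rw [← hSb']; exact hSb
  -- the deficit for a is nonnegative: (a*x - r^2)/Sa ≤ r/(a-r)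
  have hgA : (a*x - r^2)/(a^2 - 2*a*x + r^2) ≤ r/(a-r) := by
    rw [div_le_div_iff₀ hSa2 har]
    nlinarith [mul_nonneg (mul_nonneg (by linarith : (0:ℝ) ≤ a) (by linarith : (0:ℝ) ≤ a + r))
      (by linarith : (0:ℝ) ≤ r - x)]
  -- deficits are monotone: gA ≤ gB
  have hmono : r/(a-r) - (a*x - r^2)/(a^2 - 2*a*x + r^2) ≤
      r/(b-r) - (b*x - r^2)/(b^2 - 2*b*x + r^2) := by
    rw [div_sub_div _ _ (ne_of_gt har) (ne_of_gt hSa2),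
        div_sub_div _ _ (ne_of_gt hbr) (ne_of_gt hSb2),
        div_le_div_iff₀ (by positivity) (by positivity)]
    have hD := keyD' a b r x hr0 hz hab hx
    have h2 : 0 ≤ (r - x) * (b*(b+r)*(a-r)*(a^2-2*a*x+r^2) - a*(a+r)*(b-r)*(b^2-2*b*x+r^2)) :=
      mul_nonneg (by linarith) (by linarith)
    nlinarith [h2]
  have hfin : 0 ≤ (1 - lam) * (r/(a-r) - (a*x - r^2)/(a^2 - 2*a*x + r^2)) :=
    mul_nonneg (by linarith) (by linarith)
  nlinarith [mul_nonneg hlam0 (sub_nonneg.mpr hgA), hfin, hmono]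
end

section
/- If a ≥ b > 0 and z is a complex number with |z| < b, then Re(z/(a−z)) − |z|/(a−|z|) ≥ Re(z/(b−z)) − |z|/(b−|z|). Equivalently, for fixed z with |z| < b, the function t ↦ Re(z/(t−z)) − |z|/(t−|z|) is increasing on [b, ∞). -/
lemma key (x y r s t : ℝ) (hr : r^2 = x^2 + y^2) (hr0 : 0 ≤ r) (hs : r < s) (hst : s ≤ t) :
    (s*x - r^2)/((s-x)^2+y^2) - r/(s-r) ≤ (t*x - r^2)/((t-x)^2+y^2) - r/(t-r) := by
  have hxr : x ≤ r := by nlinarith [sq_nonneg (r - x), sq_nonneg y]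
  have hy : y^2 = r^2 - x^2 := by linarith
  rw [hy]
  have hsx : 0 < s - x := by linarith
  have htx : 0 < t - x := by linarith
  have hsr : 0 < s - r := by linarith
  have htr : 0 < t - r := by linarith
  have hs0 : 0 ≤ s := by linarith
  have ht0 : 0 ≤ t := by linarith
  have hDs : 0 < (s-x)^2 + (r^2 - x^2) := by nlinarith
  have hDt : 0 < (t-x)^2 + (r^2 - x^2) := by nlinarith
  have es : (s*x - r^2)/((s-x)^2+(r^2-x^2)) - r/(s-r) = s*(s+r)*(x-r)/(((s-x)^2+(r^2-x^2))*(s-r)) := by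
    rw [div_sub_div _ _ (ne_of_gt hDs) (ne_of_gt hsr), div_eq_div_iff (by positivity) (by positivity)]
    ring
  have et : (t*x - r^2)/((t-x)^2+(r^2-x^2)) - r/(t-r) = t*(t+r)*(x-r)/(((t-x)^2+(r^2-x^2))*(t-r)) := by
    rw [div_sub_div _ _ (ne_of_gt hDt) (ne_of_gt htr), div_eq_div_iff (by positivity) (by positivity)]
    ring
  rw [es, et, div_le_div_iff₀ (by positivity) (by positivity)]
  have hI : 0 ≤ (s*t - r^2)^2 + r*(t*(s-r)^2 + s*(t-r)^2) + 4*r*s*t*(r-x) :=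
    add_nonneg (add_nonneg (sq_nonneg _)
      (mul_nonneg hr0 (add_nonneg (mul_nonneg ht0 (sq_nonneg _)) (mul_nonneg hs0 (sq_nonneg _)))))
      (mul_nonneg (mul_nonneg (mul_nonneg (mul_nonneg (by norm_num) hr0) hs0) ht0) (by linarith))
  nlinarith [mul_nonneg (mul_nonneg (sub_nonneg.2 hxr) (sub_nonneg.2 hst)) hI]

lemma re_div (t : ℝ) (z : ℂ) (h : (t - z.re)^2 + z.im^2 ≠ 0) :
    (z / ((t:ℂ) - z)).re = (t*z.re - ‖z‖^2)/((t - z.re)^2 + z.im^2) := by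
  have hn : Complex.normSq ((t:ℂ) - z) = (t - z.re)^2 + z.im^2 := by
    simp [Complex.normSq_apply]; ring
  rw [Complex.div_re, hn, Complex.sq_norm, Complex.normSq_apply]
  simp only [Complex.sub_re, Complex.ofReal_re, Complex.sub_im, Complex.ofReal_im]
  field_simp
  ring

theorem stmt12 (a b : ℝ) (hb : 0 < b) (hab : b ≤ a) (z : ℂ) (hz : ‖z‖ < b) :
    ((z / ((b : ℂ) - z)).re - ‖z‖ / (b - ‖z‖) ≤
      (z / ((a : ℂ) - z)).re - ‖z‖ / (a - ‖z‖)) ∧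
    MonotoneOn (fun t : ℝ => (z / ((t : ℂ) - z)).re - ‖z‖ / (t - ‖z‖))
      (Set.Ici b) := by
  have hr : ‖z‖^2 = z.re^2 + z.im^2 := by
    rw [Complex.sq_norm, Complex.normSq_apply]; ring
  have hre : |z.re| ≤ ‖z‖ := Complex.abs_re_le_norm z
  have mono : MonotoneOn (fun t : ℝ => (z / ((t : ℂ) - z)).re - ‖z‖ / (t - ‖z‖))
      (Set.Ici b) := by
    intro s hs t ht hst
    have hzs : ‖z‖ < s := lt_of_lt_of_le hz hs
    have hzt : ‖z‖ < t := lt_of_lt_of_le hz ht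
    have hds : (s - z.re)^2 + z.im^2 ≠ 0 := by
      have h1 : 0 < s - z.re := by
        have := lt_of_le_of_lt (le_trans (le_abs_self _) hre) hzs; linarith
      positivity
    have hdt : (t - z.re)^2 + z.im^2 ≠ 0 := by
      have h1 : 0 < t - z.re := by
        have := lt_of_le_of_lt (le_trans (le_abs_self _) hre) hzt; linarith
      positivity
    simp only [re_div s z hds, re_div t z hdt]
    exact key z.re z.im ‖z‖ s t hr (norm_nonneg z) hzs hst
  exact ⟨mono (Set.self_mem_Ici) (le_trans (le_refl b) hab : b ≤ a) hab, mono⟩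
end

section
/- If ν ≥ 0 and x ∈ (0,1], then J_ν(x) − x J_{ν+1}(x) > 0. Consequently the smallest positive zero α_{ν,1} of the Dini function z ↦ (1−ν)J_ν(z) + z J_ν'(z) = J_ν(z) − z J_{ν+1}(z) satisfies α_{ν,1} > 1. -/
open Complex

/-- The Bessel function of the first kind of real order `ν`, defined for complex `z`
by its power series, with all complex powers taken with the principal branch. -/
noncomputable def besselJ (ν : ℝ) (z : ℂ) : ℂ :=
  ∑' n : ℕ, ((-1 : ℂ) ^ n / ((n.factorial : ℂ) * Complex.Gamma ((n : ℂ) + (ν : ℂ) + 1))) *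
    (z / 2) ^ (2 * (n : ℂ) + (ν : ℂ))

/-- real Bessel series term -/
noncomputable def bjt (ν x : ℝ) (n : ℕ) : ℝ :=
  (-1)^n / (n.factorial * Real.Gamma (n + ν + 1)) * (x/2) ^ (2*n + ν)

lemma gamma_arg_pos (ν : ℝ) (hν : 0 ≤ ν) (n : ℕ) : 0 < (n:ℝ) + ν + 1 := by positivity

lemma gamma_pos (ν : ℝ) (hν : 0 ≤ ν) (n : ℕ) : 0 < Real.Gamma ((n:ℝ) + ν + 1) :=
  Real.Gamma_pos_of_pos (gamma_arg_pos ν hν n)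

lemma gamma_ge (ν : ℝ) (hν : 0 ≤ ν) (n : ℕ) :
    Real.Gamma (ν + 1) ≤ Real.Gamma ((n:ℝ) + ν + 1) := by
  induction n with
  | zero => simp
  | succ n ih =>
    have h1 : ((n:ℝ) + 1) + ν + 1 = ((n:ℝ) + ν + 1) + 1 := by ring
    have h2 : Real.Gamma (((n:ℝ) + ν + 1) + 1) = ((n:ℝ) + ν + 1) * Real.Gamma ((n:ℝ) + ν + 1) :=
      Real.Gamma_add_one (gamma_arg_pos ν hν n).ne'
    push_cast
    rw [h1, h2]
    calc Real.Gamma (ν+1) ≤ Real.Gamma ((n:ℝ) + ν + 1) := ih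
    _ ≤ ((n:ℝ) + ν + 1) * Real.Gamma ((n:ℝ) + ν + 1) := by
        nlinarith [gamma_pos ν hν n, gamma_arg_pos ν hν n]

lemma rpow_split (x : ℝ) (hx : 0 < x) (ν : ℝ) (n : ℕ) :
    (x/2) ^ (2*(n:ℝ) + ν) = ((x/2)^2)^n * (x/2) ^ ν := by
  rw [Real.rpow_add (by positivity)]
  congr 1
  rw [mul_comm (2:ℝ), Real.rpow_mul (by positivity : (0:ℝ) ≤ x/2), Real.rpow_two,
    Real.rpow_natCast]
  exact pow_right_comm _ _ _

lemma bjt_abs_le (ν : ℝ) (hν : 0 ≤ ν) (x : ℝ) (hx : 0 < x) (hx1 : x ≤ 1) (n : ℕ) :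
    |bjt ν x n| ≤ (x/2)^ν / Real.Gamma (ν + 1) * (1/4)^n := by
  have hg := gamma_pos ν hν n
  have hg1 := Real.Gamma_pos_of_pos (show (0:ℝ) < ν + 1 by positivity)
  have hge := gamma_ge ν hν n
  have hfac : (1:ℝ) ≤ n.factorial := by exact_mod_cast Nat.one_le_iff_ne_zero.mpr n.factorial_ne_zero
  have habs : |bjt ν x n| = (x/2) ^ (2*(n:ℝ) + ν) / (n.factorial * Real.Gamma (n + ν + 1)) := by
    rw [bjt, abs_mul, abs_div, _root_.abs_pow, abs_neg, abs_one, one_pow, one_div,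
      abs_of_pos (by positivity : (0:ℝ) < (n.factorial : ℝ) * Real.Gamma (n + ν + 1)),
      abs_of_pos (Real.rpow_pos_of_pos (by positivity) _)]
    ring
  rw [habs, rpow_split x hx]
  have h1 : ((x/2)^2)^n ≤ (1/4)^n := by
    apply pow_le_pow_left₀ (by positivity)
    nlinarith
  have h2 : (1:ℝ) / ((n.factorial : ℝ) * Real.Gamma ((n:ℝ) + ν + 1)) ≤ 1 / Real.Gamma (ν+1) := by
    apply one_div_le_one_div_of_le hg1
    calc Real.Gamma (ν+1) ≤ Real.Gamma ((n:ℝ)+ν+1) := hge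
    _ ≤ (n.factorial : ℝ) * Real.Gamma ((n:ℝ)+ν+1) := le_mul_of_one_le_left hg.le hfac
  have hp : (0:ℝ) < (x/2)^ν := Real.rpow_pos_of_pos (by positivity) _
  calc ((x/2)^2)^n * (x/2)^ν / ((n.factorial:ℝ) * Real.Gamma ((n:ℝ)+ν+1))
      = ((x/2)^2)^n * (x/2)^ν * (1 / ((n.factorial:ℝ) * Real.Gamma ((n:ℝ)+ν+1))) := by ring
    _ ≤ (1/4)^n * (x/2)^ν * (1 / Real.Gamma (ν+1)) := by
        apply mul_le_mul (by nlinarith) h2 (by positivity) (by positivity)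
    _ = (x/2)^ν / Real.Gamma (ν+1) * (1/4)^n := by ring
  
lemma summable_bjt (ν : ℝ) (hν : 0 ≤ ν) (x : ℝ) (hx : 0 < x) (hx1 : x ≤ 1) :
    Summable (bjt ν x) := by
  apply Summable.of_abs
  apply Summable.of_nonneg_of_le (fun n => abs_nonneg _) (bjt_abs_le ν hν x hx hx1)
  exact (summable_geometric_of_lt_one (by norm_num) (by norm_num)).mul_left _

lemma bjt_combine (ν : ℝ) (hν : 0 ≤ ν) (x : ℝ) (hx : 0 < x) (n : ℕ) :
    bjt ν x n - x * bjt (ν+1) x n =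
      (-1)^n * (x/2) ^ (2*(n:ℝ) + ν) *
        (((n:ℝ) + ν + 1 - x^2/2) / (n.factorial * (((n:ℝ)+ν+1) * Real.Gamma ((n:ℝ) + ν + 1)))) := by
  have hpos := gamma_arg_pos ν hν n
  have hΓ : Real.Gamma ((n:ℝ)+(ν+1)+1) = ((n:ℝ)+ν+1) * Real.Gamma ((n:ℝ)+ν+1) := by
    rw [show (n:ℝ)+(ν+1)+1 = ((n:ℝ)+ν+1)+1 by ring, Real.Gamma_add_one hpos.ne']
  have hx2 : (x/2) ^ (2*(n:ℝ)+(ν+1)) = (x/2) ^ (2*(n:ℝ)+ν) * (x/2) := by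
    rw [show 2*(n:ℝ)+(ν+1) = (2*(n:ℝ)+ν)+1 by ring,
      Real.rpow_add_one (by positivity : (x/2) ≠ 0)]
  rw [bjt, bjt, hΓ, hx2]
  have h1 : Real.Gamma ((n:ℝ)+ν+1) ≠ 0 := (gamma_pos ν hν n).ne'
  have h2 : ((n.factorial : ℝ)) ≠ 0 := Nat.cast_ne_zero.mpr n.factorial_ne_zero
  field_simp

lemma bjt_sub_abs_le (ν : ℝ) (hν : 0 ≤ ν) (x : ℝ) (hx : 0 < x) (hx1 : x ≤ 1) (n : ℕ) :
    |bjt ν x n - x * bjt (ν+1) x n| ≤ (x/2)^ν / Real.Gamma (ν + 1) * (1/4)^n := by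
  have hpos := gamma_arg_pos ν hν n
  have hg := gamma_pos ν hν n
  have hfac : (1:ℝ) ≤ n.factorial := by exact_mod_cast Nat.one_le_iff_ne_zero.mpr n.factorial_ne_zero
  have hq : 0 < (n:ℝ) + ν + 1 - x^2/2 := by nlinarith
  have key : |bjt ν x n - x * bjt (ν+1) x n| ≤ |bjt ν x n| := by
    rw [bjt_combine ν hν x hx n, abs_mul, abs_mul, _root_.abs_pow, abs_neg, abs_one, one_pow,
      one_mul]
    have habs : |bjt ν x n| = (x/2) ^ (2*(n:ℝ) + ν) / (n.factorial * Real.Gamma (n + ν + 1)) := by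
      rw [bjt, abs_mul, abs_div, _root_.abs_pow, abs_neg, abs_one, one_pow, one_div,
        abs_of_pos (by positivity : (0:ℝ) < (n.factorial : ℝ) * Real.Gamma (n + ν + 1)),
        abs_of_pos (Real.rpow_pos_of_pos (by positivity) _)]
      ring
    rw [habs, abs_of_pos (Real.rpow_pos_of_pos (by positivity) _),
      abs_of_pos (by positivity : (0:ℝ) < ((n:ℝ) + ν + 1 - x^2/2) / (n.factorial * (((n:ℝ)+ν+1) * Real.Gamma ((n:ℝ) + ν + 1))))]
    have hrp : (0:ℝ) < (x/2) ^ (2*(n:ℝ) + ν) := Real.rpow_pos_of_pos (by positivity) _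
    rw [div_eq_mul_one_div ((x/2) ^ (2*(n:ℝ) + ν))]
    apply mul_le_mul_of_nonneg_left _ hrp.le
    rw [div_le_div_iff₀ (by positivity) (by positivity), one_mul]
    have h := mul_le_mul_of_nonneg_right
      (show (n:ℝ)+ν+1-x^2/2 ≤ (n:ℝ)+ν+1 by nlinarith)
      (mul_nonneg (by positivity : (0:ℝ) ≤ (n.factorial:ℝ)) hg.le)
    nlinarith [h]
  exact key.trans (bjt_abs_le ν hν x hx hx1 n)

lemma besselR_pos (ν : ℝ) (hν : 0 ≤ ν) (x : ℝ) (hx : 0 < x) (hx1 : x ≤ 1) :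
    0 < ∑' n, bjt ν x n - x * ∑' n, bjt (ν+1) x n := by
  set B := (x/2)^ν / Real.Gamma (ν + 1) with hB
  have hg1 := Real.Gamma_pos_of_pos (show (0:ℝ) < ν + 1 by positivity)
  have hBpos : 0 < B := div_pos (Real.rpow_pos_of_pos (by positivity) _) hg1
  have hs1 := summable_bjt ν hν x hx hx1
  have hs2 := summable_bjt (ν+1) (by linarith) x hx hx1
  set s : ℕ → ℝ := fun n => bjt ν x n - x * bjt (ν+1) x n with hsdef
  have hssum : Summable s := hs1.sub (hs2.mul_left x)
  have heq : ∑' n, bjt ν x n - x * ∑' n, bjt (ν+1) x n = ∑' n, s n := by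
    rw [← tsum_mul_left, ← Summable.tsum_sub hs1 (hs2.mul_left x)]
  rw [heq, Summable.tsum_eq_zero_add hssum]
  have htail : |∑' n, s (n+1)| ≤ B / 3 := by
    have hb : ∀ n : ℕ, ‖s (n+1)‖ ≤ B * (1/4)^(n+1) := by
      intro n
      simpa [hsdef, mul_comm] using bjt_sub_abs_le ν hν x hx hx1 (n+1)
    have hg4 : Summable (fun n : ℕ => ((1:ℝ)/4)^n) :=
      summable_geometric_of_lt_one (by norm_num) (by norm_num)
    have hsum2 : Summable (fun n : ℕ => B * (1/4:ℝ)^(n+1)) := by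
      refine (hg4.mul_left (B * (1/4))).congr fun n => ?_
      rw [pow_succ]; ring
    calc |∑' n, s (n+1)| ≤ ∑' n, B * (1/4:ℝ)^(n+1) := by
          apply (norm_tsum_le_tsum_norm (hsum2.of_nonneg_of_le (fun n => norm_nonneg _) hb)).trans
          exact Summable.tsum_le_tsum hb (hsum2.of_nonneg_of_le (fun n => norm_nonneg _) hb) hsum2
      _ = B / 3 := by
          have h4 : ∑' n : ℕ, B * (1/4:ℝ)^(n+1) = (B*(1/4)) * ∑' n : ℕ, (1/4:ℝ)^n := by
            rw [← tsum_mul_left]; exact tsum_congr fun n => by rw [pow_succ]; ring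
          rw [h4, tsum_geometric_of_lt_one (by norm_num) (by norm_num)]; ring
  have hs0 : B / 2 ≤ s 0 := by
    have h0 : s 0 = (x/2)^ν * ((ν + 1 - x^2/2) / ((ν+1) * Real.Gamma (ν + 1))) := by
      have := bjt_combine ν hν x hx 0
      simpa using this
    have hP : (0:ℝ) < (x/2)^ν := Real.rpow_pos_of_pos (by positivity) _
    have key : (1:ℝ) / Real.Gamma (ν+1) / 2 ≤ (ν+1 - x^2/2)/((ν+1)*Real.Gamma (ν+1)) := by
      rw [div_div, div_le_div_iff₀ (by positivity) (by positivity)]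
      nlinarith [mul_le_mul_of_nonneg_left (show x^2 ≤ ν+1 by nlinarith) hg1.le]
    calc B/2 = (x/2)^ν * (1/Real.Gamma (ν+1)/2) := by rw [hB]; ring
      _ ≤ (x/2)^ν * ((ν+1-x^2/2)/((ν+1)*Real.Gamma (ν+1))) :=
          mul_le_mul_of_nonneg_left key hP.le
      _ = s 0 := h0.symm
  have hneg := neg_abs_le (∑' n, s (n+1))
  have h1 : -(B/3) ≤ ∑' n, s (n+1) := le_trans (by linarith) hneg
  clear_value B s
  show 0 < s 0 + ∑' n, s (n+1)
  nlinarith [hs0, h1, hBpos]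

lemma besselJ_eq_ofReal (ν : ℝ) (hν : 0 ≤ ν) (x : ℝ) (hx : 0 < x) (hx1 : x ≤ 1) :
    besselJ ν (x:ℂ) = ((∑' n, bjt ν x n : ℝ) : ℂ) := by
  rw [besselJ, Complex.ofReal_tsum]
  refine tsum_congr fun n => ?_
  have e1 : ((x:ℂ)/2) = ((x/2 : ℝ) : ℂ) := by push_cast; ring
  have e2 : 2*(n:ℂ)+(ν:ℂ) = ((2*(n:ℝ)+ν : ℝ) : ℂ) := by push_cast; ring
  have e3 : (n:ℂ)+(ν:ℂ)+1 = (((n:ℝ)+ν+1 : ℝ) : ℂ) := by push_cast; ring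
  rw [e1, e2, e3, ← Complex.ofReal_cpow (by positivity), Complex.Gamma_ofReal, bjt]
  push_cast
  ring

noncomputable def cc (ν : ℝ) (n : ℕ) : ℂ :=
  (-1 : ℂ) ^ n / ((n.factorial : ℂ) * Complex.Gamma ((n : ℂ) + (ν : ℂ) + 1))

lemma cgamma_eq (ν : ℝ) (n : ℕ) :
    Complex.Gamma ((n:ℂ) + (ν:ℂ) + 1) = ((Real.Gamma ((n:ℝ) + ν + 1) : ℝ) : ℂ) := by
  rw [show (n:ℂ) + (ν:ℂ) + 1 = (((n:ℝ) + ν + 1 : ℝ) : ℂ) by push_cast; ring,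
    Complex.Gamma_ofReal]

lemma cc_norm (ν : ℝ) (hν : 0 ≤ ν) (n : ℕ) :
    ‖cc ν n‖ = 1 / ((n.factorial : ℝ) * Real.Gamma ((n:ℝ) + ν + 1)) := by
  have h := gamma_pos ν hν n
  rw [cc, cgamma_eq, norm_div, norm_pow, norm_neg, norm_one, one_pow,
    show ((n.factorial : ℂ) * ((Real.Gamma ((n:ℝ) + ν + 1) : ℝ) : ℂ))
      = (((n.factorial * Real.Gamma ((n:ℝ) + ν + 1) : ℝ)) : ℂ) by push_cast; ring,
    Complex.norm_real, Real.norm_of_nonneg (by positivity)]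

lemma cc_norm_le (ν : ℝ) (hν : 0 ≤ ν) (n : ℕ) :
    ‖cc ν n‖ ≤ 1 / ((n.factorial : ℝ) * Real.Gamma (ν + 1)) := by
  rw [cc_norm ν hν n]
  have h := gamma_pos ν hν n
  have hg1 := Real.Gamma_pos_of_pos (show (0:ℝ) < ν + 1 by positivity)
  have hfac : (0:ℝ) < n.factorial := by positivity
  apply one_div_le_one_div_of_le (by positivity)
  exact mul_le_mul_of_nonneg_left (gamma_ge ν hν n) hfac.le

lemma term_ofReal (ν : ℝ) (x : ℝ) (hx : 0 < x) (n : ℕ) :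
    cc ν n * (((x:ℂ))/2) ^ (2*(n:ℂ) + (ν:ℂ)) = ((bjt ν x n : ℝ) : ℂ) := by
  have e1 : ((x:ℂ)/2) = ((x/2 : ℝ) : ℂ) := by push_cast; ring
  have e2 : 2*(n:ℂ)+(ν:ℂ) = ((2*(n:ℝ)+ν : ℝ) : ℂ) := by push_cast; ring
  rw [cc, e1, e2, ← Complex.ofReal_cpow (by positivity), cgamma_eq, bjt]
  push_cast
  ring

lemma summable_g (ν : ℝ) (hν : 0 ≤ ν) (x : ℝ) (hx : 0 < x) (hx1 : x ≤ 1) :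
    Summable (fun n : ℕ => cc ν n * (((x:ℂ))/2) ^ (2*(n:ℂ) + (ν:ℂ))) := by
  refine Summable.congr ?_ (fun n => (term_ofReal ν x hx n).symm)
  exact (Complex.summable_ofReal).mpr (summable_bjt ν hν x hx hx1)

/-- The key derivative computation. -/
lemma besselJ_hasDerivAt (ν : ℝ) (hν : 0 ≤ ν) (a : ℝ) (ha : 0 < a) (ha1 : a ≤ 1) :
    HasDerivAt (besselJ ν)
      (∑' n : ℕ, cc ν n * ((2*(n:ℂ)+(ν:ℂ)) * (((a:ℂ)/2) ^ (2*(n:ℂ)+(ν:ℂ)-1)) * (1/2)))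
      (a:ℂ) := by
  classical
  set M : ℝ := max 1 ((a/4) ^ (ν-1)) with hM
  have hM1 : (1:ℝ) ≤ M := le_max_left _ _
  set C : ℝ := (2+ν) * M * (1/2) / Real.Gamma (ν + 1) with hC
  set u : ℕ → ℝ := fun n => C * ((2:ℝ)^n / n.factorial) with hu
  have hg1 := Real.Gamma_pos_of_pos (show (0:ℝ) < ν + 1 by positivity)
  have hCpos : 0 < C := by
    apply div_pos _ hg1
    have : (0:ℝ) < M := lt_of_lt_of_le one_pos hM1
    positivity
  have husum : Summable u := (Real.summable_pow_div_factorial 2).mul_left C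
  set t : Set ℂ := {z : ℂ | a/2 < z.re} ∩ Metric.ball 0 2 with ht
  have htopen : IsOpen t := (isOpen_lt continuous_const Complex.continuous_re).inter
    Metric.isOpen_ball
  have htconv : Convex ℝ t := (convex_halfSpace_re_gt (a/2)).inter (convex_ball 0 2)
  have hmem : ∀ z ∈ t, a/2 < z.re ∧ ‖z‖ < 2 := by
    intro z hz
    refine ⟨hz.1, ?_⟩
    have := hz.2
    rwa [Metric.mem_ball, Complex.dist_eq, sub_zero] at this
  have hamem : (a:ℂ) ∈ t := by
    constructor
    · simp only [Set.mem_setOf_eq, Complex.ofReal_re]; linarith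
    · rw [Metric.mem_ball, Complex.dist_eq, sub_zero, Complex.norm_real, Real.norm_eq_abs,
        abs_of_pos ha]; linarith
  -- derivative of each term
  have hterm : ∀ (n : ℕ) (z : ℂ), z ∈ t →
      HasDerivAt (fun w : ℂ => cc ν n * ((w/2) ^ (2*(n:ℂ)+(ν:ℂ))))
        (cc ν n * ((2*(n:ℂ)+(ν:ℂ)) * ((z/2) ^ (2*(n:ℂ)+(ν:ℂ)-1)) * (1/2))) z := by
    intro n z hz
    have hre : 0 < (z/2).re := by
      have h1 := (hmem z hz).1
      have : (z/2).re = z.re / 2 := by simp [Complex.div_re]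
      rw [this]; linarith
    have hd : HasDerivAt (fun w : ℂ => w/2) (1/2) z := (hasDerivAt_id z).div_const 2
    have := hd.cpow_const (c := 2*(n:ℂ)+(ν:ℂ)) (Or.inl hre)
    exact this.const_mul (cc ν n)
  -- bound
  have hbound : ∀ (n : ℕ) (z : ℂ), z ∈ t →
      ‖cc ν n * ((2*(n:ℂ)+(ν:ℂ)) * ((z/2) ^ (2*(n:ℂ)+(ν:ℂ)-1)) * (1/2))‖ ≤ u n := by
    intro n z hz
    obtain ⟨hz1, hz2⟩ := hmem z hz
    have hzpos : 0 < ‖z‖ := lt_of_lt_of_le (by linarith) (Complex.re_le_norm z)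
    have habs2 : ‖z/2‖ = ‖z‖ / 2 := by
      simp [map_div₀]
    have hlow : a/4 < ‖z/2‖ := by
      rw [habs2]
      have := Complex.re_le_norm z
      linarith
    have hhigh : ‖z/2‖ < 1 := by rw [habs2]; linarith
    -- compute the norm
    have hexp : 2*(n:ℂ)+(ν:ℂ)-1 = ((2*(n:ℝ)+ν-1 : ℝ) : ℂ) := by push_cast; ring
    have hnorm3 : ‖(z/2) ^ (2*(n:ℂ)+(ν:ℂ)-1)‖ = ‖z/2‖ ^ (2*(n:ℝ)+ν-1) := by
      rw [hexp]
      exact Complex.norm_cpow_real _ _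
    have hMbd : ‖z/2‖ ^ (2*(n:ℝ)+ν-1) ≤ M := by
      rcases le_or_gt 0 (2*(n:ℝ)+ν-1) with he | he
      · refine le_trans (Real.rpow_le_one (by positivity) hhigh.le he) hM1
      · have hn0 : n = 0 := by
          by_contra hn
          have : (1:ℝ) ≤ n := by exact_mod_cast Nat.one_le_iff_ne_zero.mpr hn
          linarith
        subst hn0
        have : ‖z/2‖ ^ (2*((0:ℕ):ℝ)+ν-1) ≤ (a/4) ^ (2*((0:ℕ):ℝ)+ν-1) :=
          Real.rpow_le_rpow_of_nonpos (by positivity) hlow.le he.le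
        refine le_trans this ?_
        simp only [Nat.cast_zero, mul_zero, zero_add]
        exact le_max_right _ _
    have hnorm2 : ‖(2*(n:ℂ)+(ν:ℂ))‖ = 2*(n:ℝ)+ν := by
      rw [show 2*(n:ℂ)+(ν:ℂ) = ((2*(n:ℝ)+ν : ℝ) : ℂ) by push_cast; ring,
        Complex.norm_real, Real.norm_of_nonneg (by positivity)]
    have h2n : 2*(n:ℝ)+ν ≤ (2+ν) * 2^n := by
      have h1 : (n:ℝ) ≤ 2^n := by exact_mod_cast (Nat.lt_two_pow_self (n := n)).le
      have h2 : (1:ℝ) ≤ 2^n := by exact_mod_cast Nat.one_le_two_pow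
      nlinarith
    calc ‖cc ν n * ((2*(n:ℂ)+(ν:ℂ)) * ((z/2) ^ (2*(n:ℂ)+(ν:ℂ)-1)) * (1/2))‖
        = ‖cc ν n‖ * (‖(2*(n:ℂ)+(ν:ℂ))‖ * ‖(z/2) ^ (2*(n:ℂ)+(ν:ℂ)-1)‖ * ‖(1/2 : ℂ)‖) := by
          rw [norm_mul, norm_mul, norm_mul]
      _ ≤ (1 / ((n.factorial : ℝ) * Real.Gamma (ν + 1))) * ((2*(n:ℝ)+ν) * M * (1/2)) := by
          rw [hnorm2, hnorm3]
          apply mul_le_mul (cc_norm_le ν hν n) _ (by positivity) (by positivity)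
          rw [show ‖(1/2 : ℂ)‖ = (1/2 : ℝ) by norm_num]
          apply mul_le_mul_of_nonneg_right _ (by norm_num)
          exact mul_le_mul_of_nonneg_left hMbd (by positivity)
      _ ≤ (1 / ((n.factorial : ℝ) * Real.Gamma (ν + 1))) * (((2+ν) * 2^n) * M * (1/2)) := by
          apply mul_le_mul_of_nonneg_left _ (by positivity)
          apply mul_le_mul_of_nonneg_right _ (by norm_num)
          exact mul_le_mul_of_nonneg_right h2n (by positivity : (0:ℝ) ≤ M)
      _ = u n := by
          rw [hu, hC]
          field_simp
  -- summability at the point a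
  have hsum0 : Summable (fun n : ℕ => cc ν n * (((a:ℂ))/2) ^ (2*(n:ℂ) + (ν:ℂ))) :=
    summable_g ν hν a ha ha1
  have := hasDerivAt_tsum_of_isPreconnected husum htopen htconv.isPreconnected
    hterm hbound hamem hsum0 hamem
  exact this

lemma deriv_identity (ν : ℝ) (hν : 0 ≤ ν) (a : ℝ) (ha : 0 < a) (ha1 : a ≤ 1) :
    (a:ℂ) * deriv (besselJ ν) (a:ℂ)
      = (ν:ℂ) * besselJ ν (a:ℂ) - (a:ℂ) * besselJ (ν+1) (a:ℂ) := by
  have hD := besselJ_hasDerivAt ν hν a ha ha1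
  rw [hD.deriv]
  have ha0 : ((a:ℂ)/2) ≠ 0 := by
    simp only [ne_eq, div_eq_zero_iff, Complex.ofReal_eq_zero, OfNat.ofNat_ne_zero, or_false]
    exact ha.ne'
  rw [← tsum_mul_left]
  have hstep : ∀ n : ℕ, (a:ℂ) * (cc ν n * ((2*(n:ℂ)+(ν:ℂ)) * (((a:ℂ)/2) ^ (2*(n:ℂ)+(ν:ℂ)-1)) * (1/2)))
      = (ν:ℂ) * (cc ν n * ((a:ℂ)/2) ^ (2*(n:ℂ)+(ν:ℂ)))
        + (2*(n:ℂ)) * (cc ν n * ((a:ℂ)/2) ^ (2*(n:ℂ)+(ν:ℂ))) := by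
    intro n
    have hw : ((a:ℂ)/2)^(2*(n:ℂ)+(ν:ℂ)) = ((a:ℂ)/2)^(2*(n:ℂ)+(ν:ℂ)-1) * ((a:ℂ)/2) := by
      conv_lhs => rw [show 2*(n:ℂ)+(ν:ℂ) = (2*(n:ℂ)+(ν:ℂ)-1)+1 by ring]
      rw [Complex.cpow_add _ _ ha0, Complex.cpow_one]
    rw [hw]; ring
  rw [tsum_congr hstep]
  have hgsum : Summable (fun n : ℕ => cc ν n * (((a:ℂ))/2) ^ (2*(n:ℂ) + (ν:ℂ))) :=
    summable_g ν hν a ha ha1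
  have hksum : Summable (fun n : ℕ => (2*(n:ℂ)) * (cc ν n * ((a:ℂ)/2) ^ (2*(n:ℂ)+(ν:ℂ)))) := by
    set B : ℝ := (a/2)^ν / Real.Gamma (ν + 1) with hB
    have hg1 := Real.Gamma_pos_of_pos (show (0:ℝ) < ν + 1 by positivity)
    have hBpos : 0 < B := div_pos (Real.rpow_pos_of_pos (by positivity) _) hg1
    have htgt : Summable (fun n : ℕ => (2*B) * ((n:ℝ)^1 * (1/4:ℝ)^n)) :=
      (summable_pow_mul_geometric_of_norm_lt_one 1 (by rw [Real.norm_of_nonneg] <;> norm_num)).mul_left (2*B)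
    apply Summable.of_norm_bounded htgt
    intro n
    rw [norm_mul, term_ofReal ν a ha n, Complex.norm_real]
    have h1 : ‖(2*(n:ℂ))‖ = 2*(n:ℝ) := by
      rw [show (2*(n:ℂ)) = ((2*(n:ℝ) : ℝ) : ℂ) by push_cast; ring, Complex.norm_real,
        Real.norm_of_nonneg (by positivity)]
    rw [h1]
    have h2 : ‖bjt ν a n‖ ≤ B * (1/4)^n := by
      rw [Real.norm_eq_abs]
      simpa [hB, mul_comm] using bjt_abs_le ν hν a ha ha1 n
    calc 2*(n:ℝ) * ‖bjt ν a n‖ ≤ 2*(n:ℝ) * (B * (1/4)^n) :=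
          mul_le_mul_of_nonneg_left h2 (by positivity)
      _ = (2*B) * ((n:ℝ)^1 * (1/4:ℝ)^n) := by ring
  rw [Summable.tsum_add (hgsum.mul_left (ν:ℂ)) hksum, tsum_mul_left]
  have hk0 : (2*((0:ℕ):ℂ)) * (cc ν 0 * ((a:ℂ)/2) ^ (2*((0:ℕ):ℂ)+(ν:ℂ))) = 0 := by simp
  rw [Summable.tsum_eq_zero_add hksum, hk0, zero_add]
  have hterm2 : ∀ m : ℕ, (2*(((m+1:ℕ)):ℂ)) * (cc ν (m+1) * ((a:ℂ)/2) ^ (2*(((m+1:ℕ)):ℂ)+(ν:ℂ)))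
      = -((a:ℂ) * (cc (ν+1) m * ((a:ℂ)/2) ^ (2*(m:ℂ)+(((ν+1:ℝ)):ℂ)))) := by
    intro m
    have hcast : (((m+1:ℕ)):ℂ) = (m:ℂ)+1 := by push_cast; ring
    have hfac : (((m+1).factorial : ℕ) : ℂ) = ((m:ℂ)+1) * (m.factorial:ℂ) := by
      rw [Nat.factorial_succ]; push_cast; ring
    have hΓ : Complex.Gamma ((m:ℂ)+1+(ν:ℂ)+1) = Complex.Gamma ((m:ℂ)+(((ν+1:ℝ)):ℂ)+1) := by
      congr 1; push_cast; ring
    have hpow : ((a:ℂ)/2) ^ (2*((m:ℂ)+1)+(ν:ℂ))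
        = ((a:ℂ)/2) ^ (2*(m:ℂ)+(((ν+1:ℝ)):ℂ)) * ((a:ℂ)/2) := by
      rw [show 2*((m:ℂ)+1)+(ν:ℂ) = (2*(m:ℂ)+(((ν+1:ℝ)):ℂ))+1 by push_cast; ring,
        Complex.cpow_add _ _ ha0, Complex.cpow_one]
    have hΓne : Complex.Gamma ((m:ℂ)+(((ν+1:ℝ)):ℂ)+1) ≠ 0 := by
      apply Complex.Gamma_ne_zero_of_re_pos
      simp only [Complex.add_re, Complex.one_re, Complex.natCast_re, Complex.ofReal_re]
      push_cast
      linarith [Nat.cast_nonneg (α := ℝ) m]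
    have hfacne : ((m.factorial : ℕ) : ℂ) ≠ 0 := by
      exact_mod_cast Nat.cast_ne_zero.mpr m.factorial_ne_zero
    have hm1 : ((m:ℂ)+1) ≠ 0 := Nat.cast_add_one_ne_zero m
    set X : ℂ := (m.factorial : ℂ) * Complex.Gamma ((m:ℂ)+(((ν+1:ℝ)):ℂ)+1) with hX
    have hcc : cc ν (m+1) * (2*((m:ℂ)+1)) = (-2) * (-1)^m / X := by
      rw [cc, hcast, hfac, hΓ, pow_succ, div_mul_eq_mul_div,
        show (-1:ℂ)^m * -1 * (2*((m:ℂ)+1)) = ((m:ℂ)+1) * ((-2) * (-1)^m) by ring,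
        show (((m:ℂ)+1) * (m.factorial:ℂ)) * Complex.Gamma ((m:ℂ)+(((ν+1:ℝ)):ℂ)+1)
          = ((m:ℂ)+1) * X by rw [hX]; ring,
        mul_div_mul_left _ _ hm1]
    have hccR : cc (ν+1) m = (-1:ℂ)^m / X := rfl
    rw [hcast, hpow,
      show (2:ℂ)*((m:ℂ)+1) * (cc ν (m+1) * (((a:ℂ)/2)^(2*(m:ℂ)+(((ν+1:ℝ)):ℂ)) * ((a:ℂ)/2)))
        = (cc ν (m+1) * (2*((m:ℂ)+1))) * ((a:ℂ)/2)^(2*(m:ℂ)+(((ν+1:ℝ)):ℂ)) * ((a:ℂ)/2) by ring,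
      hcc, hccR]
    ring
  rw [tsum_congr hterm2, tsum_neg, tsum_mul_left]
  have hJ1 : besselJ ν (a:ℂ) = ∑' n : ℕ, cc ν n * ((a:ℂ)/2)^(2*(n:ℂ)+(ν:ℂ)) := rfl
  have hJ2 : besselJ (ν+1) (a:ℂ)
      = ∑' n : ℕ, cc (ν+1) n * ((a:ℂ)/2)^(2*(n:ℂ)+(((ν+1:ℝ)):ℂ)) := rfl
  rw [hJ1, hJ2]
  ring

theorem stmt15 (ν : ℝ) (hν : 0 ≤ ν) :
    (∀ x : ℝ, 0 < x → x ≤ 1 →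
      0 < (besselJ ν (x : ℂ) - (x : ℂ) * besselJ (ν + 1) (x : ℂ)).re) ∧
    ∀ a : ℝ, IsLeast {x : ℝ | 0 < x ∧
      ((1 - ν : ℝ) : ℂ) * besselJ ν (x : ℂ) + (x : ℂ) * deriv (besselJ ν) (x : ℂ) = 0} a →
      1 < a := by

  have part1 : ∀ x : ℝ, 0 < x → x ≤ 1 →
      0 < (besselJ ν (x : ℂ) - (x : ℂ) * besselJ (ν + 1) (x : ℂ)).re := by
    intro x hx hx1
    rw [besselJ_eq_ofReal ν hν x hx hx1, besselJ_eq_ofReal (ν+1) (by linarith) x hx hx1,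
      ← Complex.ofReal_mul, ← Complex.ofReal_sub, Complex.ofReal_re]
    exact besselR_pos ν hν x hx hx1
  refine ⟨part1, ?_⟩
  rintro a ⟨⟨ha, heq⟩, -⟩
  by_contra hcon
  push_neg at hcon
  have hid := deriv_identity ν hν a ha hcon
  have h2 : ((1 - ν : ℝ) : ℂ) * besselJ ν (a:ℂ) + (a:ℂ) * deriv (besselJ ν) (a:ℂ)
      = besselJ ν (a:ℂ) - (a:ℂ) * besselJ (ν+1) (a:ℂ) := by
    rw [hid]; push_cast; ring
  rw [h2] at heq
  have hpos := part1 a ha hcon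
  rw [heq] at hpos
  simp at hpos
end

section
/- If ν ≥ 0 and x ∈ (0,1], then 2 J_ν(x) − x J_{ν+1}(x) > 0. Consequently the smallest positive zero β_{ν,1} of the Dini function z ↦ (2−ν)J_ν(z) + z J_ν'(z) = 2J_ν(z) − z J_{ν+1}(z) satisfies β_{ν,1} > 1. -/
open Complex

namespace Bessel16

lemma gamma_arg_pos {ν : ℝ} (hν : 0 ≤ ν) (n : ℕ) : 0 < (n : ℝ) + ν + 1 := by positivity

lemma gammaR_pos {ν : ℝ} (hν : 0 ≤ ν) (n : ℕ) : 0 < Real.Gamma ((n:ℝ) + ν + 1) :=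
  Real.Gamma_pos_of_pos (gamma_arg_pos hν n)

lemma gammaR_succ {ν : ℝ} (hν : 0 ≤ ν) (n : ℕ) :
    Real.Gamma ((((n+1) : ℕ) : ℝ) + ν + 1) = ((n:ℝ) + ν + 1) * Real.Gamma ((n:ℝ) + ν + 1) := by
  have h : ((n:ℝ) + ν + 1) ≠ 0 := (gamma_arg_pos hν n).ne'
  have h2 := Real.Gamma_add_one h
  push_cast
  rw [show (n:ℝ) + 1 + ν + 1 = ((n:ℝ) + ν + 1) + 1 by ring, h2]

lemma gammaR_ge {ν : ℝ} (hν : 0 ≤ ν) (n : ℕ) :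
    (n.factorial : ℝ) * Real.Gamma (ν + 1) ≤ Real.Gamma ((n:ℝ) + ν + 1) := by
  induction n with
  | zero => simp
  | succ n ih =>
    rw [gammaR_succ hν n, Nat.factorial_succ]
    push_cast
    have h1 : (0:ℝ) < Real.Gamma (ν + 1) := Real.Gamma_pos_of_pos (by linarith)
    have h2 : (1:ℝ) ≤ n.factorial := by exact_mod_cast Nat.one_le_iff_ne_zero.mpr n.factorial_ne_zero
    nlinarith [gammaR_pos hν n, Nat.cast_nonneg (α := ℝ) n]

lemma one_le_fact_gamma {ν : ℝ} (hν : 0 ≤ ν) (n : ℕ) :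
    Real.Gamma (ν + 1) ≤ (n.factorial : ℝ) * Real.Gamma ((n:ℝ) + ν + 1) := by
  have h1 : (0:ℝ) < Real.Gamma (ν + 1) := Real.Gamma_pos_of_pos (by linarith)
  have h2 : (1:ℝ) ≤ n.factorial := by exact_mod_cast Nat.one_le_iff_ne_zero.mpr n.factorial_ne_zero
  have h4 := gammaR_ge hν n
  have h5 := gammaR_pos hν n
  nlinarith [mul_le_mul_of_nonneg_left h4 (le_of_lt (show (0:ℝ) < n.factorial by positivity))]

/-- positive term sequence -/
noncomputable def tp (ν x : ℝ) (n : ℕ) : ℝ :=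
  2*((n:ℝ)+1) / (n.factorial * Real.Gamma ((n:ℝ) + ν + 1)) * (x/2) ^ (2*(n:ℝ) + ν)

/-- alternating series -/
noncomputable def us (ν x : ℝ) (n : ℕ) : ℝ := (-1)^n * tp ν x n

/-- real bessel series terms -/
noncomputable def gR (ν x : ℝ) (n : ℕ) : ℝ :=
  (-1)^n / (n.factorial * Real.Gamma ((n:ℝ) + ν + 1)) * (x/2) ^ (2*(n:ℝ) + ν)

lemma tp_pos {ν x : ℝ} (hν : 0 ≤ ν) (hx : 0 < x) (n : ℕ) : 0 < tp ν x n := by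
  have := gammaR_pos hν n
  have h2 : (0:ℝ) < n.factorial := by positivity
  have : (0:ℝ) < (x/2) ^ (2*(n:ℝ) + ν) := Real.rpow_pos_of_pos (by linarith) _
  unfold tp
  positivity

lemma abs_us {ν x : ℝ} (hν : 0 ≤ ν) (hx : 0 < x) (n : ℕ) : |us ν x n| = tp ν x n := by
  unfold us
  rw [abs_mul, abs_of_pos (tp_pos hν hx n)]
  simp

lemma tp_ratio {ν x : ℝ} (hν : 0 ≤ ν) (hx : 0 < x) (n : ℕ) :
    tp ν x (n+1) = (((n:ℝ)+2) * (x/2)^(2:ℕ) / ((((n:ℝ)+1))^2 * ((n:ℝ)+1+ν))) * tp ν x n := by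
  have hq : (0:ℝ) < x/2 := by linarith
  have hΓ := gammaR_pos hν n
  have hf : (0:ℝ) < n.factorial := by positivity
  have hrw : (x/2) ^ (2*((n:ℝ)+1) + ν) = (x/2) ^ (2*(n:ℝ) + ν) * (x/2)^(2:ℕ) := by
    rw [← Real.rpow_natCast (x/2) 2, ← Real.rpow_add hq]
    ring_nf
  unfold tp
  rw [gammaR_succ hν n, Nat.factorial_succ]
  push_cast
  rw [hrw]
  have h1 : ((n:ℝ)+1+ν) ≠ 0 := by positivity
  field_simp
  ring

end Bessel16

namespace Bessel16

lemma sq_le {x : ℝ} (hx : 0 < x) (hx1 : x ≤ 1) : (x/2)^(2:ℕ) ≤ 1/4 := by nlinarith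

lemma tp_one_le {ν x : ℝ} (hν : 0 ≤ ν) (hx : 0 < x) (hx1 : x ≤ 1) :
    tp ν x 1 ≤ (1/2) * tp ν x 0 := by
  rw [tp_ratio hν hx 0]
  have h0 := tp_pos hν hx 0
  have hs := sq_le hx hx1
  have hsq : (0:ℝ) ≤ (x/2)^(2:ℕ) := by positivity
  have : ((0:ℕ):ℝ) + 2 = 2 := by norm_num
  gcongr ?_ * tp ν x 0
  rw [div_le_iff₀ (by positivity)]
  push_cast
  nlinarith

lemma tp_succ_le {ν x : ℝ} (hν : 0 ≤ ν) (hx : 0 < x) (hx1 : x ≤ 1) (n : ℕ) :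
    tp ν x (n+2) ≤ (1/8) * tp ν x (n+1) := by
  rw [show n+2 = (n+1)+1 from rfl, tp_ratio hν hx (n+1)]
  have h0 := tp_pos hν hx (n+1)
  have hs := sq_le hx hx1
  have hsq : (0:ℝ) ≤ (x/2)^(2:ℕ) := by positivity
  gcongr ?_ * tp ν x (n+1)
  rw [div_le_iff₀ (by positivity)]
  push_cast
  have hn : (0:ℝ) ≤ (n:ℝ) := Nat.cast_nonneg n
  nlinarith

lemma tp_geom {ν x : ℝ} (hν : 0 ≤ ν) (hx : 0 < x) (hx1 : x ≤ 1) (n : ℕ) :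
    tp ν x (n+1) ≤ tp ν x 1 * (1/8)^n := by
  induction n with
  | zero => simp
  | succ n ih =>
    calc tp ν x (n+1+1) ≤ (1/8) * tp ν x (n+1) := tp_succ_le hν hx hx1 n
      _ ≤ (1/8) * (tp ν x 1 * (1/8)^n) := by linarith [tp_pos hν hx (n+1)]
      _ = tp ν x 1 * (1/8)^(n+1) := by ring

lemma summable_tp {ν x : ℝ} (hν : 0 ≤ ν) (hx : 0 < x) (hx1 : x ≤ 1) :
    Summable (tp ν x) := by
  rw [← summable_nat_add_iff 1]
  refine Summable.of_nonneg_of_le (fun n => (tp_pos hν hx (n+1)).le) (tp_geom hν hx hx1) ?_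
  exact (summable_geometric_of_lt_one (by norm_num) (by norm_num)).mul_left _

lemma summable_us {ν x : ℝ} (hν : 0 ≤ ν) (hx : 0 < x) (hx1 : x ≤ 1) :
    Summable (us ν x) := by
  refine Summable.of_norm_bounded (summable_tp hν hx hx1) (fun n => ?_)
  rw [Real.norm_eq_abs, abs_us hν hx]

lemma tsum_us_pos {ν x : ℝ} (hν : 0 ≤ ν) (hx : 0 < x) (hx1 : x ≤ 1) :
    0 < ∑' n, us ν x n := by
  have hsum := summable_us hν hx hx1
  have hsucc : Summable (fun n => us ν x (n+1)) := by
    rw [summable_nat_add_iff 1]; exact hsum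
  rw [Summable.tsum_eq_zero_add hsum]
  have h0 : us ν x 0 = tp ν x 0 := by unfold us; simp
  have habs : |∑' n, us ν x (n+1)| ≤ ∑' n, tp ν x 1 * (1/8)^n := by
    calc |∑' n, us ν x (n+1)| ≤ ∑' n, |us ν x (n+1)| := by
          simpa [Real.norm_eq_abs] using norm_tsum_le_tsum_norm (f := fun n => us ν x (n+1))
            (by simpa [Real.norm_eq_abs, abs_us hν hx] using
              (summable_nat_add_iff 1).mpr (summable_tp hν hx hx1))
      _ ≤ ∑' n, tp ν x 1 * (1/8)^n := by
          refine Summable.tsum_le_tsum (fun n => ?_) ?_ ?_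
          · rw [abs_us hν hx]; exact tp_geom hν hx hx1 n
          · simpa [Real.norm_eq_abs, abs_us hν hx] using
              (summable_nat_add_iff 1).mpr (summable_tp hν hx hx1)
          · exact (summable_geometric_of_lt_one (by norm_num) (by norm_num)).mul_left _
  have hgeo : ∑' n : ℕ, tp ν x 1 * (1/8:ℝ)^n = tp ν x 1 * (8/7) := by
    rw [tsum_mul_left, tsum_geometric_of_lt_one (by norm_num) (by norm_num)]
    norm_num
  have h1 := tp_one_le hν hx hx1
  have h0p := tp_pos hν hx 0
  have := abs_le.mp habs
  rw [hgeo] at this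
  rw [h0]
  nlinarith [this.1, this.2]

end Bessel16

namespace Bessel16

lemma summable_gR {ν x : ℝ} (hν : 0 ≤ ν) (hx : 0 < x) (hx1 : x ≤ 1) :
    Summable (gR ν x) := by
  refine Summable.of_norm_bounded (summable_tp hν hx hx1) (fun n => ?_)
  have hΓ := gammaR_pos hν n
  have hf : (0:ℝ) < n.factorial := by positivity
  have hq : (0:ℝ) < (x/2) ^ (2*(n:ℝ) + ν) := Real.rpow_pos_of_pos (by linarith) _
  unfold gR tp
  have h1 : |(-1:ℝ)^n| = 1 := by simp
  rw [Real.norm_eq_abs, abs_mul, abs_div, h1, abs_of_pos (mul_pos hf hΓ), abs_of_pos hq]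
  refine mul_le_mul_of_nonneg_right ?_ hq.le
  rw [div_le_div_iff₀ (by positivity) (by positivity)]
  nlinarith [mul_pos hf hΓ, mul_nonneg (Nat.cast_nonneg (α := ℝ) n) (mul_pos hf hΓ).le]

lemma besselJ_eq_ofReal {ν x : ℝ} (hx : 0 < x) :
    besselJ ν (x:ℂ) = ((∑' n, gR ν x n : ℝ) : ℂ) := by
  unfold besselJ
  rw [Complex.ofReal_tsum]
  refine tsum_congr (fun n => ?_)
  have e1 : ((2:ℂ) * n + ν) = (((2*(n:ℝ)+ν : ℝ)):ℂ) := by push_cast; ring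
  have e2 : ((n:ℂ) + ν + 1) = (((n:ℝ)+ν+1 : ℝ):ℂ) := by push_cast; ring
  have e3 : ((x:ℂ)/2) = (((x/2 : ℝ)):ℂ) := by push_cast; ring
  rw [e1, e2, e3, Complex.Gamma_ofReal, ← Complex.ofReal_cpow (by linarith)]
  unfold gR
  push_cast
  ring

lemma key_term {ν x : ℝ} (hν : 0 ≤ ν) (hx : 0 < x) (n : ℕ) :
    2 * gR ν x (n+1) - x * gR (ν+1) x n = us ν x (n+1) := by
  have hq : (0:ℝ) < x/2 := by linarith
  have hΓ : 0 < Real.Gamma ((n:ℝ)+1+ν+1) := Real.Gamma_pos_of_pos (by positivity)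
  have hf : (0:ℝ) < n.factorial := by positivity
  unfold gR us tp
  push_cast
  have hA : (x/2) ^ (2*((n:ℝ)+1)+ν) = (x/2) ^ (2*(n:ℝ)+(ν+1)) * (x/2) := by
    rw [show 2*((n:ℝ)+1)+ν = (2*(n:ℝ)+(ν+1))+1 by ring, Real.rpow_add_one hq.ne']
  have hg : Real.Gamma ((n:ℝ)+(ν+1)+1) = Real.Gamma ((n:ℝ)+1+ν+1) := by ring_nf
  rw [hA, hg]
  have hx2 : (0:ℝ) < (x/2) ^ (2*(n:ℝ)+(ν+1)) := Real.rpow_pos_of_pos hq _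
  simp only [Nat.factorial_succ]
  push_cast
  field_simp
  ring

lemma key_identity {ν x : ℝ} (hν : 0 ≤ ν) (hx : 0 < x) (hx1 : x ≤ 1) :
    2 * (∑' n, gR ν x n) - x * (∑' n, gR (ν+1) x n) = ∑' n, us ν x n := by
  have hg : Summable (gR ν x) := summable_gR hν hx hx1
  have hg' : Summable (gR (ν+1) x) := summable_gR (by linarith) hx hx1
  have h1 : Summable (fun n => 2 * gR ν x (n+1)) :=
    (((summable_nat_add_iff 1).mpr hg).mul_left 2)
  have h2 : Summable (fun n => x * gR (ν+1) x n) := hg'.mul_left x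
  have hus : Summable (us ν x) := summable_us hν hx hx1
  calc 2 * (∑' n, gR ν x n) - x * (∑' n, gR (ν+1) x n)
      = (∑' n, 2 * gR ν x n) - ∑' n, x * gR (ν+1) x n := by rw [tsum_mul_left, tsum_mul_left]
    _ = (2 * gR ν x 0 + ∑' n, 2 * gR ν x (n+1)) - ∑' n, x * gR (ν+1) x n := by
        rw [Summable.tsum_eq_zero_add (hg.mul_left 2)]
    _ = 2 * gR ν x 0 + ((∑' n, 2 * gR ν x (n+1)) - ∑' n, x * gR (ν+1) x n) := by ring
    _ = 2 * gR ν x 0 + ∑' n, (2 * gR ν x (n+1) - x * gR (ν+1) x n) := by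
        rw [Summable.tsum_sub h1 h2]
    _ = us ν x 0 + ∑' n, us ν x (n+1) := by
        rw [tsum_congr (fun n => key_term hν hx n)]
        congr 1
        unfold us gR tp
        norm_num
        ring
    _ = ∑' n, us ν x n := (Summable.tsum_eq_zero_add hus).symm

end Bessel16

namespace Bessel16

/-- term of the complex series -/
noncomputable def fc (ν : ℝ) (n : ℕ) (z : ℂ) : ℂ :=
  ((-1 : ℂ) ^ n / ((n.factorial : ℂ) * Complex.Gamma ((n : ℂ) + (ν : ℂ) + 1))) *
    (z / 2) ^ (2 * (n : ℂ) + (ν : ℂ))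

/-- term of the derivative series -/
noncomputable def fd (ν : ℝ) (n : ℕ) (z : ℂ) : ℂ :=
  ((-1 : ℂ) ^ n / ((n.factorial : ℂ) * Complex.Gamma ((n : ℂ) + (ν : ℂ) + 1))) *
    ((2 * (n : ℂ) + (ν : ℂ)) * (z / 2) ^ (2 * (n : ℂ) + (ν : ℂ) - 1) * (1/2))

/-- real version of derivative term -/
noncomputable def dR (ν x : ℝ) (n : ℕ) : ℝ :=
  (-1)^n / (n.factorial * Real.Gamma ((n:ℝ) + ν + 1)) *
    ((2*(n:ℝ) + ν) * (x/2) ^ (2*(n:ℝ) + ν - 1) * (1/2))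

lemma besselJ_eq_tsum_fc (ν : ℝ) (z : ℂ) : besselJ ν z = ∑' n, fc ν n z := rfl

lemma abs_coeff {ν : ℝ} (hν : 0 ≤ ν) (n : ℕ) :
    ‖(-1 : ℂ) ^ n / ((n.factorial : ℂ) * Complex.Gamma ((n : ℂ) + (ν : ℂ) + 1))‖
      = 1 / ((n.factorial : ℝ) * Real.Gamma ((n:ℝ) + ν + 1)) := by
  have e2 : ((n:ℂ) + ν + 1) = (((n:ℝ)+ν+1 : ℝ):ℂ) := by push_cast; ring
  rw [norm_div, norm_mul, e2, Complex.Gamma_ofReal, Complex.norm_real, Real.norm_eq_abs,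
    abs_of_pos (gammaR_pos hν n), norm_pow]
  simp

lemma abs_cpow_real {w : ℂ} (hw : w ≠ 0) (t : ℝ) :
    ‖w ^ (t:ℂ)‖ = ‖w‖ ^ t := by
  exact Complex.norm_cpow_real w t

lemma ball_facts {b : ℝ} (hb : 0 < b) (hb1 : b ≤ 1) {z : ℂ}
    (hz : z ∈ Metric.ball (b:ℂ) (b/2)) :
    0 < z.re ∧ b/4 ≤ ‖z/2‖ ∧ ‖z/2‖ ≤ 3/4 := by
  rw [Metric.mem_ball, Complex.dist_eq] at hz
  have h1 : |(z - (b:ℂ)).re| ≤ ‖z - b‖ := Complex.abs_re_le_norm _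
  have h2 : (z - (b:ℂ)).re = z.re - b := by simp
  have h3 : |‖z‖ - ‖(b:ℂ)‖| ≤ ‖z - b‖ :=
    abs_norm_sub_norm_le z b
  have h4 : ‖(b:ℂ)‖ = b := by rw [Complex.norm_real, Real.norm_eq_abs, abs_of_pos hb]
  rw [h4] at h3
  have h3' := abs_le.mp h3
  have h1' := abs_le.mp h1
  rw [h2] at h1'
  have habs : ‖z/2‖ = ‖z‖ / 2 := by
    rw [norm_div, Complex.norm_two]
  refine ⟨by linarith [h1'.1], ?_, ?_⟩
  · rw [habs]; linarith [h3'.2]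
  · rw [habs]; linarith [h3'.1]

lemma hasDerivAt_fc {ν : ℝ} (n : ℕ) {z : ℂ} (hz : 0 < z.re) :
    HasDerivAt (fc ν n) (fd ν n z) z := by
  have h2 : HasDerivAt (fun w : ℂ => w / 2) (1/2 : ℂ) z := by
    simpa using (hasDerivAt_id z).div_const 2
  have h0 : z / 2 ∈ Complex.slitPlane := by
    rw [Complex.mem_slitPlane_iff]
    left
    rw [show (2:ℂ) = ((2:ℝ):ℂ) by norm_num, Complex.div_ofReal_re]
    linarith
  have h3 := (h2.cpow_const (c := 2 * (n:ℂ) + (ν:ℂ)) h0).const_mul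
    ((-1 : ℂ) ^ n / ((n.factorial : ℂ) * Complex.Gamma ((n : ℂ) + (ν : ℂ) + 1)))
  exact h3

lemma exp_split {r : ℝ} (hr : 0 < r) (n : ℕ) (t : ℝ) :
    r ^ (2*(n:ℝ) + t) = (r^2)^n * r ^ t := by
  rw [Real.rpow_add hr, show (2*(n:ℝ)) = ((2*n : ℕ) : ℝ) by push_cast; ring,
    Real.rpow_natCast, pow_mul]

lemma summable_aux : Summable (fun n:ℕ => ((n:ℝ)+1) * (9/16)^n) := by
  have h1 := summable_pow_mul_geometric_of_norm_lt_one (R := ℝ) 1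
    (show ‖(9/16:ℝ)‖ < 1 by rw [Real.norm_eq_abs, abs_of_pos (by norm_num : (0:ℝ) < 9/16)]; norm_num)
  have h2 : Summable (fun n:ℕ => (9/16:ℝ)^n) :=
    summable_geometric_of_lt_one (by norm_num) (by norm_num)
  exact (h1.add h2).congr (fun n => by push_cast; ring)

lemma hasDerivAt_besselJ {ν b : ℝ} (hν : 0 ≤ ν) (hb : 0 < b) (hb1 : b ≤ 1) :
    HasDerivAt (besselJ ν) (∑' n, fd ν n (b:ℂ)) (b:ℂ) := by
  set s : Set ℂ := Metric.ball (b:ℂ) (b/2) with hs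
  have hΓν : 0 < Real.Gamma (ν + 1) := Real.Gamma_pos_of_pos (by linarith)
  set K : ℝ := (b/4)^(ν-1) + (3/4)^(ν-1) with hK
  have hKpos : 0 < K := by
    have i1 : (0:ℝ) < (b/4)^(ν-1) := Real.rpow_pos_of_pos (by linarith) _
    have i2 : (0:ℝ) < (3/4:ℝ)^(ν-1) := Real.rpow_pos_of_pos (by norm_num) _
    rw [hK]; linarith
  set u : ℕ → ℝ := fun n => (K * (1+ν) / Real.Gamma (ν+1)) * (((n:ℝ)+1) * (9/16)^n) with hu
  have hbound : ∀ (n : ℕ), ∀ z ∈ s, ‖fd ν n z‖ ≤ u n := by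
    intro n z hzs
    obtain ⟨hre, hlo, hhi⟩ := ball_facts hb hb1 hzs
    have hwpos : 0 < ‖z/2‖ := by linarith
    have hw0 : (z/2 : ℂ) ≠ 0 := by
      intro h; rw [h] at hwpos; simp at hwpos
    have e1 : (2 * (n:ℂ) + (ν:ℂ) - 1) = (((2*(n:ℝ)+ν-1 : ℝ)):ℂ) := by push_cast; ring
    have e4 : ‖2 * (n:ℂ) + (ν:ℂ)‖ = 2*(n:ℝ)+ν := by
      rw [show (2 * (n:ℂ) + (ν:ℂ)) = (((2*(n:ℝ)+ν : ℝ)):ℂ) by push_cast; ring]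
      rw [Complex.norm_real, Real.norm_eq_abs]
      exact abs_of_nonneg (by positivity)
    have hnorm : ‖fd ν n z‖ = (1 / ((n.factorial : ℝ) * Real.Gamma ((n:ℝ) + ν + 1))) *
        ((2*(n:ℝ)+ν) * ‖z/2‖ ^ (2*(n:ℝ)+ν-1) * (1/2)) := by
      unfold fd
      rw [norm_mul, abs_coeff hν, norm_mul, norm_mul, e4, e1,
        abs_cpow_real hw0]
      norm_num
    rw [hnorm]
    have hpow : ‖z/2‖ ^ (2*(n:ℝ)+ν-1) ≤ (9/16)^n * K := by
      rw [show 2*(n:ℝ)+ν-1 = 2*(n:ℝ)+(ν-1) by ring, exp_split hwpos n (ν-1)]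
      have hsq : ‖z/2‖^2 ≤ (9/16 : ℝ) := by nlinarith
      have h2 : (‖z/2‖^2)^n ≤ ((9:ℝ)/16)^n :=
        pow_le_pow_left₀ (by positivity) hsq n
      have h3 : ‖z/2‖ ^ (ν-1) ≤ K := by
        rcases le_or_gt 1 ν with h | h
        · have hle : ‖z/2‖ ^ (ν-1) ≤ (3/4:ℝ)^(ν-1) :=
            Real.rpow_le_rpow hwpos.le hhi (by linarith)
          have hb4 : (0:ℝ) ≤ (b/4)^(ν-1) := (Real.rpow_pos_of_pos (by linarith) _).le
          rw [hK]; linarith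
        · have hle : ‖z/2‖ ^ (ν-1) ≤ (b/4:ℝ)^(ν-1) :=
            Real.rpow_le_rpow_of_nonpos (by linarith) hlo (by linarith)
          have h34 : (0:ℝ) ≤ (3/4:ℝ)^(ν-1) := (Real.rpow_pos_of_pos (by norm_num) _).le
          rw [hK]; linarith
      exact mul_le_mul h2 h3 (Real.rpow_nonneg hwpos.le _) (by positivity)
    have hfact := one_le_fact_gamma hν n
    have hΓn := gammaR_pos hν n
    have hfn : (0:ℝ) < n.factorial := by positivity
    calc (1 / ((n.factorial : ℝ) * Real.Gamma ((n:ℝ) + ν + 1))) *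
          ((2*(n:ℝ)+ν) * ‖z/2‖ ^ (2*(n:ℝ)+ν-1) * (1/2))
        ≤ (1 / Real.Gamma (ν+1)) * ((2*(n:ℝ)+ν) * ((9/16)^n * K) * (1/2)) := by
          refine mul_le_mul (one_div_le_one_div_of_le hΓν hfact) ?_ ?_ (by positivity)
          · exact mul_le_mul_of_nonneg_right
              (mul_le_mul_of_nonneg_left hpow (by positivity)) (by norm_num)
          · exact mul_nonneg (mul_nonneg (by positivity)
              (Real.rpow_nonneg hwpos.le _)) (by norm_num)
      _ = (K*(9/16)^n/Real.Gamma (ν+1)) * ((2*(n:ℝ)+ν)/2) := by ring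
      _ ≤ (K*(9/16)^n/Real.Gamma (ν+1)) * ((1+ν)*((n:ℝ)+1)) := by
          refine mul_le_mul_of_nonneg_left ?_ (by positivity)
          nlinarith [Nat.cast_nonneg (α := ℝ) n]
      _ = u n := by rw [hu]; ring
  have hsumu : Summable u := (summable_aux.mul_left _)
  have hf' : TendstoUniformlyOn (fun (N : Finset ℕ) z => ∑ n ∈ N, fd ν n z)
      (fun z => ∑' n, fd ν n z) Filter.atTop s :=
    tendstoUniformlyOn_tsum hsumu hbound
  have hf : ∀ᶠ (N : Finset ℕ) in Filter.atTop, ∀ z ∈ s,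
      HasDerivAt (fun w => ∑ n ∈ N, fc ν n w) (∑ n ∈ N, fd ν n z) z := by
    refine Filter.Eventually.of_forall (fun N z hzs => ?_)
    exact HasDerivAt.fun_sum (fun n _ => hasDerivAt_fc n (ball_facts hb hb1 hzs).1)
  have hfg : ∀ z ∈ s, Filter.Tendsto (fun N : Finset ℕ => ∑ n ∈ N, fc ν n z)
      Filter.atTop (nhds (besselJ ν z)) := by
    intro z hzs
    obtain ⟨hre, hlo, hhi⟩ := ball_facts hb hb1 hzs
    have hwpos : 0 < ‖z/2‖ := by linarith
    have hw0 : (z/2 : ℂ) ≠ 0 := by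
      intro h; rw [h] at hwpos; simp at hwpos
    have hsfc : Summable (fun n => fc ν n z) := by
      refine Summable.of_norm_bounded
        (g := fun n => ((3/4:ℝ)^ν / Real.Gamma (ν+1)) * (9/16)^n)
        ((summable_geometric_of_lt_one (by norm_num) (by norm_num)).mul_left _)
        (fun n => ?_)
      have e5 : (2 * (n:ℂ) + (ν:ℂ)) = (((2*(n:ℝ)+ν : ℝ)):ℂ) := by push_cast; ring
      have hnorm : ‖fc ν n z‖ = (1 / ((n.factorial : ℝ) * Real.Gamma ((n:ℝ) + ν + 1))) *
          ‖z/2‖ ^ (2*(n:ℝ)+ν) := by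
        unfold fc
        rw [norm_mul, abs_coeff hν, e5, abs_cpow_real hw0]
      rw [hnorm, exp_split hwpos n ν]
      have hfact := one_le_fact_gamma hν n
      have hΓn := gammaR_pos hν n
      have hfn : (0:ℝ) < n.factorial := by positivity
      have hsq : ‖z/2‖^2 ≤ (9/16 : ℝ) := by nlinarith
      have h2 : (‖z/2‖^2)^n ≤ ((9:ℝ)/16)^n :=
        pow_le_pow_left₀ (by positivity) hsq n
      have h3 : ‖z/2‖ ^ ν ≤ (3/4:ℝ)^ν :=
        Real.rpow_le_rpow hwpos.le hhi hν
      calc (1 / ((n.factorial : ℝ) * Real.Gamma ((n:ℝ) + ν + 1))) *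
            ((‖z/2‖^2)^n * ‖z/2‖ ^ ν)
          ≤ (1 / Real.Gamma (ν+1)) * ((9/16)^n * (3/4:ℝ)^ν) := by
            refine mul_le_mul (one_div_le_one_div_of_le hΓν hfact)
              (mul_le_mul h2 h3 (Real.rpow_nonneg hwpos.le _) (by positivity)) ?_ (by positivity)
            exact mul_nonneg (by positivity) (Real.rpow_nonneg hwpos.le _)
        _ = ((3/4:ℝ)^ν / Real.Gamma (ν+1)) * (9/16)^n := by ring
    rw [besselJ_eq_tsum_fc]
    exact hsfc.hasSum
  have hmem : (b:ℂ) ∈ s := Metric.mem_ball_self (by positivity)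
  have := hasDerivAt_of_tendstoUniformlyOn Metric.isOpen_ball hf' hf hfg hmem
  exact this

end Bessel16

namespace Bessel16

lemma tsum_fd_eq {ν b : ℝ} (hb : 0 < b) :
    ∑' n, fd ν n (b:ℂ) = ((∑' n, dR ν b n : ℝ) : ℂ) := by
  rw [Complex.ofReal_tsum]
  refine tsum_congr fun n => ?_
  unfold fd dR
  have e1 : (2 * (n:ℂ) + (ν:ℂ) - 1) = (((2*(n:ℝ)+ν-1 : ℝ)):ℂ) := by push_cast; ring
  have e2 : ((n:ℂ) + ν + 1) = (((n:ℝ)+ν+1 : ℝ):ℂ) := by push_cast; ring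
  have e3 : (((b:ℝ):ℂ)/2) = (((b/2 : ℝ)):ℂ) := by push_cast; ring
  rw [e1, e2, e3, Complex.Gamma_ofReal, ← Complex.ofReal_cpow (by linarith)]
  push_cast
  ring

lemma summable_dR {ν b : ℝ} (hν : 0 ≤ ν) (hb : 0 < b) (hb1 : b ≤ 1) :
    Summable (dR ν b) := by
  refine Summable.of_norm_bounded (g := fun n => ((1+ν)/b) * tp ν b n)
    ((summable_tp hν hb hb1).mul_left _) (fun n => ?_)
  have hq : (0:ℝ) < b/2 := by linarith
  have hΓ := gammaR_pos hν n
  have hf : (0:ℝ) < n.factorial := by positivity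
  have hQ : (0:ℝ) < (b/2) ^ (2*(n:ℝ) + ν) := Real.rpow_pos_of_pos hq _
  have hqe : (b/2:ℝ) ^ (2*(n:ℝ)+ν-1) = (b/2)^(2*(n:ℝ)+ν) / (b/2) := by
    rw [show 2*(n:ℝ)+ν-1 = (2*(n:ℝ)+ν)-1 by ring, Real.rpow_sub hq, Real.rpow_one]
  have h1 : |(-1:ℝ)^n| = 1 := by simp
  have key : (2*(n:ℝ)+ν) ≤ 2*(1+ν)*((n:ℝ)+1) := by nlinarith [Nat.cast_nonneg (α := ℝ) n]
  unfold dR tp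
  beta_reduce
  rw [Real.norm_eq_abs, abs_mul, abs_div, h1, hqe, abs_of_pos (mul_pos hf hΓ),
    _root_.abs_of_nonneg (show (0:ℝ) ≤ (2*(n:ℝ)+ν) * ((b/2)^(2*(n:ℝ)+ν)/(b/2)) * (1/2) by positivity)]
  have hrw : 1 / ((n.factorial:ℝ) * Real.Gamma ((n:ℝ)+ν+1)) *
      ((2*(n:ℝ)+ν) * ((b/2)^(2*(n:ℝ)+ν) / (b/2)) * (1/2)) =
      ((b/2)^(2*(n:ℝ)+ν) / ((n.factorial:ℝ) * Real.Gamma ((n:ℝ)+ν+1))) * ((2*(n:ℝ)+ν)/b) := by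
    field_simp
  have hrw2 : (1+ν)/b * (2*((n:ℝ)+1) / ((n.factorial:ℝ) * Real.Gamma ((n:ℝ)+ν+1)) *
      (b/2)^(2*(n:ℝ)+ν)) =
      ((b/2)^(2*(n:ℝ)+ν) / ((n.factorial:ℝ) * Real.Gamma ((n:ℝ)+ν+1))) *
        (2*(1+ν)*((n:ℝ)+1)/b) := by
    field_simp
  rw [hrw, hrw2]
  gcongr

lemma key_identity2 {ν b : ℝ} (hν : 0 ≤ ν) (hb : 0 < b) (hb1 : b ≤ 1) :
    (2-ν) * (∑' n, gR ν b n) + b * (∑' n, dR ν b n) = ∑' n, us ν b n := by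
  rw [← tsum_mul_left (a := 2-ν) (f := gR ν b), ← tsum_mul_left (a := b),
    ← Summable.tsum_add ((summable_gR hν hb hb1).mul_left _) ((summable_dR hν hb hb1).mul_left _)]
  refine tsum_congr fun n => ?_
  have hq : (0:ℝ) < b/2 := by linarith
  have hΓ := gammaR_pos hν n
  have hf : (0:ℝ) < n.factorial := by positivity
  have hqe : (b/2:ℝ) ^ (2*(n:ℝ)+ν-1) = (b/2)^(2*(n:ℝ)+ν) / (b/2) := by
    rw [show 2*(n:ℝ)+ν-1 = (2*(n:ℝ)+ν)-1 by ring, Real.rpow_sub hq, Real.rpow_one]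
  unfold gR dR us tp
  rw [hqe]
  field_simp
  ring

end Bessel16

theorem stmt16 (ν : ℝ) (hν : 0 ≤ ν) :
    (∀ x : ℝ, 0 < x → x ≤ 1 →
      0 < (2 * besselJ ν (x : ℂ) - (x : ℂ) * besselJ (ν + 1) (x : ℂ)).re) ∧
    ∀ b : ℝ, IsLeast {x : ℝ | 0 < x ∧
      ((2 - ν : ℝ) : ℂ) * besselJ ν (x : ℂ) + (x : ℂ) * deriv (besselJ ν) (x : ℂ) = 0} b →
      1 < b := by
  constructor
  · intro x hx hx1
    rw [Bessel16.besselJ_eq_ofReal (ν := ν) hx, Bessel16.besselJ_eq_ofReal (ν := ν+1) hx]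
    have hc : ((2:ℂ) * ((∑' n, Bessel16.gR ν x n : ℝ):ℂ)
          - (x:ℂ) * ((∑' n, Bessel16.gR (ν+1) x n : ℝ):ℂ))
        = ((2 * (∑' n, Bessel16.gR ν x n) - x * (∑' n, Bessel16.gR (ν+1) x n) : ℝ) : ℂ) := by
      push_cast; ring
    rw [hc, Complex.ofReal_re, Bessel16.key_identity hν hx hx1]
    exact Bessel16.tsum_us_pos hν hx hx1
  · rintro b ⟨⟨hb0, heq⟩, -⟩
    by_contra hcon
    push_neg at hcon
    have hd := (Bessel16.hasDerivAt_besselJ hν hb0 hcon).deriv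
    rw [hd, Bessel16.tsum_fd_eq hb0, Bessel16.besselJ_eq_ofReal hb0] at heq
    have h2 : ((2-ν) * (∑' n, Bessel16.gR ν b n) + b * (∑' n, Bessel16.dR ν b n) : ℝ) = 0 := by
      exact_mod_cast heq
    rw [Bessel16.key_identity2 hν hb0 hcon] at h2
    exact (Bessel16.tsum_us_pos hν hb0 hcon).ne' h2
end

section
/- The function Λ : (−2, ∞) → ℝ defined by Λ(ν) = 2^{ν+1} Γ(ν+2) J_{ν+1}(1) = 1 + Σ_{n≥1} (−1)^n / (4^n n! (ν+2)(ν+3)⋯(ν+n+1)) is strictly increasing on (−2, ∞). Consequently the equation J_{ν+1}(1) = 0 has a unique root ν⋆ in (−2, ∞) (ν⋆ ≈ −1.7744), and J_{ν+1}(1) > 0 for every ν > ν⋆. -/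
open Complex

noncomputable def Lam (ν : ℝ) : ℝ :=
  1 + ∑' n : ℕ, (-1 : ℝ) ^ (n + 1) /
    (4 ^ (n + 1) * ((n + 1).factorial : ℝ) * ∏ k ∈ Finset.range (n + 1), (ν + 2 + (k : ℝ)))

noncomputable def aaP (ν : ℝ) (n : ℕ) : ℝ := ∏ k ∈ Finset.range n, (ν + 2 + (k : ℝ))

noncomputable def aa (ν : ℝ) (n : ℕ) : ℝ :=
  (-1 : ℝ) ^ (n + 1) / (4 ^ (n + 1) * ((n + 1).factorial : ℝ) * aaP ν (n + 1))

lemma Lam_def : Lam = fun ν => 1 + ∑' n, aa ν n := rfl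

lemma aaP_pos {ν : ℝ} (hν : -2 < ν) (n : ℕ) : 0 < aaP ν n :=
  Finset.prod_pos fun k _ => by
    have : (0:ℝ) ≤ (k:ℝ) := Nat.cast_nonneg k
    linarith

lemma aaP_succ_ge {ν : ℝ} (hν : -2 < ν) (n : ℕ) : ν + 2 ≤ aaP ν (n + 1) := by
  rw [aaP, Finset.prod_range_succ']
  push_cast
  have h1 : (1:ℝ) ≤ ∏ k ∈ Finset.range n, (ν + 2 + ((k:ℝ) + 1)) := by
    calc (1:ℝ) = ∏ _k ∈ Finset.range n, (1:ℝ) := by simp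
      _ ≤ _ := by
        apply Finset.prod_le_prod (fun k _ => zero_le_one) (fun k _ => ?_)
        have : (0:ℝ) ≤ (k:ℝ) := Nat.cast_nonneg k
        linarith
  have h2 : (0:ℝ) < ν + 2 := by linarith
  nlinarith

lemma abs_aa_le {ν : ℝ} (hν : -2 < ν) (n : ℕ) : |aa ν n| ≤ (ν + 2)⁻¹ * (4⁻¹ : ℝ) ^ (n + 1) := by
  have hP := aaP_pos hν (n + 1)
  have hP2 := aaP_succ_ge hν n
  have hfac : (1:ℝ) ≤ ((n + 1).factorial : ℝ) := by
    exact_mod_cast Nat.one_le_iff_ne_zero.mpr (Nat.factorial_pos (n+1)).ne'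
  have h2 : (0:ℝ) < ν + 2 := by linarith
  have key : (ν + 2) * 4 ^ (n + 1) ≤ 4 ^ (n + 1) * ((n + 1).factorial : ℝ) * aaP ν (n + 1) := by
    have h4 : (0:ℝ) < 4 ^ (n + 1) := by positivity
    nlinarith [mul_le_mul hfac hP2 h2.le (le_trans zero_le_one hfac), h4.le]
  calc |aa ν n| = ((4:ℝ) ^ (n + 1) * ((n + 1).factorial : ℝ) * aaP ν (n + 1))⁻¹ := by
        rw [aa, abs_div, _root_.abs_pow, abs_neg, abs_one, one_pow, one_div,
          abs_of_pos (by positivity)]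
    _ ≤ ((ν + 2) * 4 ^ (n + 1))⁻¹ := by
        apply inv_anti₀ (by positivity) key
    _ = (ν + 2)⁻¹ * (4⁻¹ : ℝ) ^ (n + 1) := by rw [mul_inv, inv_pow]

lemma summable_bound (c : ℝ) (j : ℕ) : Summable (fun n : ℕ => c * (4⁻¹ : ℝ) ^ (n + j)) := by
  have h0 : Summable (fun n : ℕ => ((4:ℝ)⁻¹) ^ n) :=
    summable_geometric_of_lt_one (by norm_num) (by norm_num)
  refine ((h0.mul_left (c * (4⁻¹:ℝ) ^ j))).congr fun n => ?_
  rw [pow_add]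
  ring

lemma summable_aa {ν : ℝ} (hν : -2 < ν) : Summable (aa ν) := by
  refine Summable.of_norm_bounded (summable_bound (ν+2)⁻¹ 1) fun n => ?_
  simpa [Real.norm_eq_abs, add_comm] using abs_aa_le hν n

lemma aaP_succ (ν : ℝ) (n : ℕ) : aaP ν (n + 1) = aaP ν n * (ν + 2 + n) := by
  rw [aaP, aaP, Finset.prod_range_succ]

lemma aaP_factor (ν : ℝ) (n : ℕ) :
    aaP ν (n + 1) = (∏ k ∈ Finset.range n, (ν + 2 + ((k : ℝ) + 1))) * (ν + 2) := by
  rw [aaP, Finset.prod_range_succ']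
  have h : ∀ k ∈ Finset.range n, (ν + 2 + (((k:ℕ) + 1 : ℕ) : ℝ)) = ν + 2 + ((k : ℝ) + 1) := by
    intro k _; push_cast; ring
  rw [Finset.prod_congr rfl h]
  norm_num

lemma pair_core {p q a b e d F M : ℝ} (hp : 0 < p) (hq : 0 < q) (hqp : 0 < q - p)
    (hM : 0 ≤ M) (ha : 1 < a) (hab : a < b) (hba : b - a = d) (he : 0 < e) (hea : e ≤ a)
    (hkey : p * d ≤ e * (q - p)) (hF : 0 < F) :
    0 < (-(1 / (F * q)) - -(1 / (F * p)))
      + (1 / (4 * (2 * M + 2) * F * (q * b)) - 1 / (4 * (2 * M + 2) * F * (p * a))) := by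
  subst hba
  have ha0 : (0:ℝ) < a := by linarith
  have hb0 : (0:ℝ) < b := by linarith
  have hb1 : (1:ℝ) < b := by linarith
  have hM2 : (0:ℝ) < 2 * M + 2 := by linarith
  have h2 : 0 < 4 * (2 * M + 2) * a * b - b - e := by
    nlinarith [mul_pos (sub_pos.2 ha) (sub_pos.2 hb1),
      mul_nonneg (mul_nonneg hM ha0.le) hb0.le, mul_pos ha0 hb0]
  have hnum : 0 < (q - p) * (4 * (2 * M + 2) * a * b - b) - p * (b - a) := by
    nlinarith [mul_pos hqp h2]
  have heq : (-(1 / (F * q)) - -(1 / (F * p)))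
      + (1 / (4 * (2 * M + 2) * F * (q * b)) - 1 / (4 * (2 * M + 2) * F * (p * a)))
      = ((q - p) * (4 * (2 * M + 2) * a * b - b) - p * (b - a))
        / (4 * (2 * M + 2) * F * p * q * a * b) := by
    field_simp
    ring
  rw [heq]
  exact div_pos hnum (by positivity)

lemma pair_pos {μ ν : ℝ} (hμ : -2 < μ) (hlt : μ < ν) (m : ℕ) :
    0 < (aa ν (2 * m) - aa μ (2 * m)) + (aa ν (2 * m + 1) - aa μ (2 * m + 1)) := by
  have hν : -2 < ν := lt_trans hμ hlt
  have hμ2 : (0:ℝ) < μ + 2 := by linarith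
  have hm : (0:ℝ) ≤ (m:ℝ) := Nat.cast_nonneg m
  -- value computations
  have ea1 : aa ν (2 * m) =
      -(1 / ((4 ^ (2 * m + 1) * (((2 * m + 1).factorial : ℕ) : ℝ)) * aaP ν (2 * m + 1))) := by
    rw [aa, Odd.neg_one_pow ⟨m, by ring⟩]; push_cast; ring
  have ea2 : aa μ (2 * m) =
      -(1 / ((4 ^ (2 * m + 1) * (((2 * m + 1).factorial : ℕ) : ℝ)) * aaP μ (2 * m + 1))) := by
    rw [aa, Odd.neg_one_pow ⟨m, by ring⟩]; push_cast; ring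
  have ea3 : aa ν (2 * m + 1) =
      1 / (4 * (2 * (m:ℝ) + 2) * (4 ^ (2 * m + 1) * (((2 * m + 1).factorial : ℕ) : ℝ))
        * (aaP ν (2 * m + 1) * (ν + 2 + (2 * (m:ℝ) + 1)))) := by
    rw [aa, Even.neg_one_pow ⟨m + 1, by ring⟩, aaP_succ, Nat.factorial_succ, pow_succ]
    push_cast
    ring
  have ea4 : aa μ (2 * m + 1) =
      1 / (4 * (2 * (m:ℝ) + 2) * (4 ^ (2 * m + 1) * (((2 * m + 1).factorial : ℕ) : ℝ))
        * (aaP μ (2 * m + 1) * (μ + 2 + (2 * (m:ℝ) + 1)))) := by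
    rw [aa, Even.neg_one_pow ⟨m + 1, by ring⟩, aaP_succ, Nat.factorial_succ, pow_succ]
    push_cast
    ring
  rw [ea1, ea2, ea3, ea4]
  -- facts about p, q
  have hSμpos : 0 < ∏ k ∈ Finset.range (2 * m), (μ + 2 + ((k : ℝ) + 1)) :=
    Finset.prod_pos fun k _ => by
      have : (0:ℝ) ≤ (k:ℝ) := Nat.cast_nonneg k; linarith
  have hSle : (∏ k ∈ Finset.range (2 * m), (μ + 2 + ((k : ℝ) + 1)))
      ≤ ∏ k ∈ Finset.range (2 * m), (ν + 2 + ((k : ℝ) + 1)) :=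
    Finset.prod_le_prod (fun k _ => by
        have : (0:ℝ) ≤ (k:ℝ) := Nat.cast_nonneg k; linarith)
      (fun k _ => by linarith)
  have hpf := aaP_factor μ (2 * m)
  have hqf := aaP_factor ν (2 * m)
  have t1 : (∏ k ∈ Finset.range (2 * m), (μ + 2 + ((k : ℝ) + 1))) * (ν + 2)
      ≤ (∏ k ∈ Finset.range (2 * m), (ν + 2 + ((k : ℝ) + 1))) * (ν + 2) :=
    mul_le_mul_of_nonneg_right hSle (by linarith)
  have hqp : 0 < aaP ν (2 * m + 1) - aaP μ (2 * m + 1) := by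
    rw [hpf, hqf]; nlinarith [mul_pos hSμpos (show (0:ℝ) < ν - μ by linarith)]
  have hkey : aaP μ (2 * m + 1) * (ν - μ)
      ≤ (μ + 2) * (aaP ν (2 * m + 1) - aaP μ (2 * m + 1)) := by
    rw [hpf, hqf]
    nlinarith [mul_le_mul_of_nonneg_left t1 hμ2.le, mul_pos hSμpos hμ2]
  exact pair_core (aaP_pos hμ _) (aaP_pos hν _) hqp hm
    (by nlinarith) (by linarith) (by ring) hμ2 (by linarith) hkey (by positivity)

lemma lam_strictMonoOn : StrictMonoOn Lam (Set.Ioi (-2 : ℝ)) := by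
  intro μ hμ ν hν hlt
  simp only [Set.mem_Ioi] at hμ hν
  have hsμ := summable_aa hμ
  have hsν := summable_aa hν
  have hd : Summable (fun n => aa ν n - aa μ n) := hsν.sub hsμ
  have h2 : Function.Injective (fun k : ℕ => 2 * k) := fun x y h => by
    have : 2 * x = 2 * y := h
    omega
  have h21 : Function.Injective (fun k : ℕ => 2 * k + 1) := fun x y h => by
    have : 2 * x + 1 = 2 * y + 1 := h
    omega
  have heven : Summable (fun k => aa ν (2 * k) - aa μ (2 * k)) := hd.comp_injective h2
  have hodd : Summable (fun k => aa ν (2 * k + 1) - aa μ (2 * k + 1)) := hd.comp_injective h21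
  have key : 0 < ∑' n, (aa ν n - aa μ n) := by
    rw [← tsum_even_add_odd (f := fun n => aa ν n - aa μ n) heven hodd,
      ← Summable.tsum_add heven hodd]
    exact Summable.tsum_pos (heven.add hodd) (fun k => (pair_pos hμ hlt k).le) 0 (pair_pos hμ hlt 0)
  have hdiff : Lam ν - Lam μ = ∑' n, (aa ν n - aa μ n) := by
    rw [Lam_def]
    simp only
    rw [Summable.tsum_sub hsν hsμ]
    ring
  linarith

lemma aa_continuousOn (n : ℕ) {c : ℝ} (hc : -2 < c) :
    ContinuousOn (fun x => aa x n) (Set.Ici c) := by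
  apply ContinuousOn.div continuousOn_const
  · apply Continuous.continuousOn
    apply Continuous.mul continuous_const
    unfold aaP
    exact continuous_finset_prod _ fun k _ => by continuity
  · intro x hx
    have hx' : -2 < x := lt_of_lt_of_le hc hx
    have h1 := aaP_pos hx' (n + 1)
    positivity

lemma lam_continuousOn : ContinuousOn Lam (Set.Ioi (-2 : ℝ)) := by
  intro ν hν
  have hν' : -2 < ν := hν
  set c : ℝ := (-2 + ν) / 2 with hcdef
  have hc : -2 < c := by rw [hcdef]; linarith
  have hcν : c < ν := by rw [hcdef]; linarith
  have hc2 : (0:ℝ) < c + 2 := by linarith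
  have hunif : TendstoUniformlyOn (fun (t : Finset ℕ) x => ∑ n ∈ t, aa x n)
      (fun x => ∑' n, aa x n) Filter.atTop (Set.Ici c) := by
    apply tendstoUniformlyOn_tsum (u := fun n => (c + 2)⁻¹ * (4⁻¹ : ℝ) ^ (n + 1))
    · simpa using summable_bound (c + 2)⁻¹ 1
    · intro n x hx
      have hx' : -2 < x := lt_of_lt_of_le hc hx
      have hx2 : (0:ℝ) < x + 2 := by linarith
      calc ‖aa x n‖ = |aa x n| := rfl
        _ ≤ (x + 2)⁻¹ * (4⁻¹ : ℝ) ^ (n + 1) := abs_aa_le hx' n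
        _ ≤ (c + 2)⁻¹ * (4⁻¹ : ℝ) ^ (n + 1) := by
            have : (x + 2)⁻¹ ≤ (c + 2)⁻¹ := by
              apply inv_anti₀ hc2; linarith [hx.out]
            have h4 : (0:ℝ) ≤ (4⁻¹ : ℝ) ^ (n + 1) := by positivity
            exact mul_le_mul_of_nonneg_right this h4
  have hcont : ContinuousOn (fun x => ∑' n, aa x n) (Set.Ici c) := by
    apply hunif.continuousOn
    apply Filter.Eventually.frequently
    filter_upwards with t
    exact continuousOn_finset_sum t fun n _ => aa_continuousOn n hc
  have hat : ContinuousAt (fun x => ∑' n, aa x n) ν :=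
    hcont.continuousAt (Ici_mem_nhds hcν)
  rw [Lam_def]
  exact (continuousAt_const.add hat).continuousWithinAt

lemma tail_bound {ν : ℝ} (hν : -2 < ν) :
    |∑' n, aa ν (n + 1)| ≤ (ν + 2)⁻¹ * 12⁻¹ := by
  have hs : Summable (fun n => aa ν (n + 1)) := (summable_nat_add_iff 1).mpr (summable_aa hν)
  have hb := summable_bound (ν + 2)⁻¹ 2
  calc |∑' n, aa ν (n + 1)| ≤ ∑' n, |aa ν (n + 1)| := by
        simpa using norm_tsum_le_tsum_norm (f := fun n => aa ν (n + 1)) hs.abs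
    _ ≤ ∑' n : ℕ, (ν + 2)⁻¹ * (4⁻¹ : ℝ) ^ (n + 2) := by
        apply Summable.tsum_le_tsum _ hs.abs hb
        intro n
        have := abs_aa_le hν (n + 1)
        calc |aa ν (n + 1)| ≤ (ν + 2)⁻¹ * (4⁻¹:ℝ) ^ (n + 1 + 1) := this
          _ = (ν + 2)⁻¹ * (4⁻¹:ℝ) ^ (n + 2) := by ring_nf
    _ = (ν + 2)⁻¹ * 12⁻¹ := by
        rw [tsum_mul_left]
        have h1 : ∑' n : ℕ, ((4:ℝ)⁻¹) ^ (n + 2) = 12⁻¹ := by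
          have h0 : ∑' n : ℕ, ((4:ℝ)⁻¹) ^ n = (1 - 4⁻¹)⁻¹ :=
            tsum_geometric_of_lt_one (by norm_num) (by norm_num)
          calc ∑' n : ℕ, ((4:ℝ)⁻¹) ^ (n + 2)
              = ∑' n : ℕ, ((4:ℝ)⁻¹) ^ 2 * (4⁻¹) ^ n := by
                congr 1; funext n; rw [pow_add]; ring
            _ = ((4:ℝ)⁻¹) ^ 2 * (1 - 4⁻¹)⁻¹ := by rw [tsum_mul_left, h0]
            _ = 12⁻¹ := by norm_num
        rw [h1]

lemma lam_split {ν : ℝ} (hν : -2 < ν) :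
    Lam ν = 1 + (-(4 * (ν + 2))⁻¹ + ∑' n, aa ν (n + 1)) := by
  rw [Lam_def]
  simp only
  congr 1
  rw [tsum_eq_zero_add' ((summable_nat_add_iff 1).mpr (summable_aa hν))]
  congr 1
  have h1 : aaP ν 1 = ν + 2 := by rw [aaP]; simp
  have hne : (ν + 2) ≠ 0 := by intro h; linarith [h]
  rw [aa, h1]
  simp only [zero_add, pow_one, Nat.factorial_one, Nat.cast_one, mul_one]
  rw [neg_div, one_div] <;> norm_num

lemma lam_neg : Lam (-2 + 12⁻¹) < 0 := by
  have hν : (-2 : ℝ) < -2 + 12⁻¹ := by norm_num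
  have h2 : (-2 + 12⁻¹ : ℝ) + 2 = 12⁻¹ := by norm_num
  have ht := tail_bound hν
  rw [h2] at ht
  rw [lam_split hν, h2]
  have := abs_le.mp ht
  norm_num at this ⊢
  linarith [this.2]

lemma lam_pos0 : 0 < Lam 0 := by
  have hν : (-2 : ℝ) < 0 := by norm_num
  have ht := tail_bound hν
  rw [lam_split hν]
  norm_num at ht ⊢
  have := abs_le.mp ht
  linarith [this.1]

lemma gamma_prod {ν : ℝ} (hν : -2 < ν) (n : ℕ) :
    Complex.Gamma ((ν : ℂ) + 2 + n) =
      Complex.Gamma ((ν : ℂ) + 2) * ∏ k ∈ Finset.range n, ((ν : ℂ) + 2 + k) := by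
  induction n with
  | zero => simp
  | succ n ih =>
    have hne : (ν : ℂ) + 2 + n ≠ 0 := by
      intro h
      have hre := congrArg Complex.re h
      simp only [Complex.add_re, Complex.ofReal_re, Complex.natCast_re, Complex.zero_re] at hre
      have : (0:ℝ) ≤ (n:ℝ) := Nat.cast_nonneg n
      norm_num at hre
      linarith
    have hstep : (ν : ℂ) + 2 + (n + 1 : ℕ) = ((ν : ℂ) + 2 + n) + 1 := by push_cast; ring
    rw [hstep, Complex.Gamma_add_one _ hne, ih, Finset.prod_range_succ]
    ring

lemma gammaC_ne {ν : ℝ} (hν : -2 < ν) : Complex.Gamma ((ν : ℂ) + 2) ≠ 0 := by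
  have h : ((ν : ℂ) + 2) = ((ν + 2 : ℝ) : ℂ) := by push_cast; ring
  rw [h, Complex.Gamma_ofReal]
  exact_mod_cast (Real.Gamma_pos_of_pos (by linarith)).ne'

lemma cpow_fact (ν : ℝ) (n : ℕ) :
    (2 : ℂ) ^ ((ν : ℂ) + 1) * ((1 : ℂ) / 2) ^ (2 * (n : ℂ) + ((ν : ℂ) + 1)) =
      ((4 : ℂ) ^ n)⁻¹ := by
  have harg : (2 : ℂ).arg ≠ Real.pi := by
    have : (2 : ℂ) = ((2 : ℝ) : ℂ) := by norm_num
    rw [this, Complex.arg_ofReal_of_nonneg (by norm_num)]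
    exact Real.pi_ne_zero.symm
  rw [one_div, Complex.inv_cpow _ _ harg, ← div_eq_mul_inv,
    ← Complex.cpow_sub _ _ (by norm_num : (2:ℂ) ≠ 0)]
  have h1 : (ν : ℂ) + 1 - (2 * (n : ℂ) + ((ν : ℂ) + 1)) = -(2 * n : ℕ) := by push_cast; ring
  rw [h1, Complex.cpow_neg, Complex.cpow_natCast]
  congr 1
  rw [pow_mul]
  norm_num

lemma lam_identity {ν : ℝ} (hν : -2 < ν) :
    (Lam ν : ℂ) = (2 : ℂ) ^ ((ν : ℂ) + 1) * Complex.Gamma ((ν : ℂ) + 2) *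
      besselJ (ν + 1) (1 : ℂ) := by
  rw [besselJ]
  rw [← tsum_mul_left]
  have hterm : ∀ n : ℕ,
      (2 : ℂ) ^ ((ν : ℂ) + 1) * Complex.Gamma ((ν : ℂ) + 2) *
        (((-1 : ℂ) ^ n / ((n.factorial : ℂ) * Complex.Gamma ((n : ℂ) + ((ν + 1 : ℝ) : ℂ) + 1))) *
          ((1 : ℂ) / 2) ^ (2 * (n : ℂ) + ((ν + 1 : ℝ) : ℂ))) =
      (-1 : ℂ) ^ n / ((4 : ℂ) ^ n * (n.factorial : ℂ) *
        ∏ k ∈ Finset.range n, ((ν : ℂ) + 2 + k)) := by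
    intro n
    have hg : Complex.Gamma ((n : ℂ) + ((ν + 1 : ℝ) : ℂ) + 1) =
        Complex.Gamma ((ν : ℂ) + 2) * ∏ k ∈ Finset.range n, ((ν : ℂ) + 2 + k) := by
      rw [show (n : ℂ) + ((ν + 1 : ℝ) : ℂ) + 1 = (ν : ℂ) + 2 + n by push_cast; ring]
      exact gamma_prod hν n
    have hcast : ((ν + 1 : ℝ) : ℂ) = (ν : ℂ) + 1 := by push_cast; ring
    rw [hg, hcast]
    have hprodne : (∏ k ∈ Finset.range n, ((ν : ℂ) + 2 + k)) ≠ 0 := by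
      apply Finset.prod_ne_zero_iff.mpr
      intro k _
      intro h
      have hre := congrArg Complex.re h
      simp only [Complex.add_re, Complex.ofReal_re, Complex.natCast_re, Complex.zero_re] at hre
      have : (0:ℝ) ≤ (k:ℝ) := Nat.cast_nonneg k
      norm_num at hre
      linarith
    have hfne : (n.factorial : ℂ) ≠ 0 := by exact_mod_cast (Nat.factorial_pos n).ne'
    have h4ne : ((4:ℂ) ^ n) ≠ 0 := by norm_num
    rw [show (2 : ℂ) ^ ((ν : ℂ) + 1) * Complex.Gamma ((ν : ℂ) + 2) *
        (((-1 : ℂ) ^ n / ((n.factorial : ℂ) *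
          (Complex.Gamma ((ν : ℂ) + 2) * ∏ k ∈ Finset.range n, ((ν : ℂ) + 2 + k)))) *
          ((1 : ℂ) / 2) ^ (2 * (n : ℂ) + ((ν : ℂ) + 1))) =
        ((2 : ℂ) ^ ((ν : ℂ) + 1) * ((1 : ℂ) / 2) ^ (2 * (n : ℂ) + ((ν : ℂ) + 1))) *
          (Complex.Gamma ((ν : ℂ) + 2) *
            ((-1 : ℂ) ^ n / ((n.factorial : ℂ) *
              (Complex.Gamma ((ν : ℂ) + 2) * ∏ k ∈ Finset.range n, ((ν : ℂ) + 2 + k))))) from by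
      ring]
    rw [cpow_fact]
    field_simp [gammaC_ne hν]
  rw [tsum_congr hterm]
  -- now sum the explicit series
  have hshift : ∀ n : ℕ, (-1 : ℂ) ^ (n + 1) / ((4 : ℂ) ^ (n + 1) * ((n + 1).factorial : ℂ) *
      ∏ k ∈ Finset.range (n + 1), ((ν : ℂ) + 2 + k)) = ((aa ν n : ℝ) : ℂ) := by
    intro n
    rw [aa, aaP]
    push_cast
    ring
  have hsum : Summable (fun n : ℕ => (-1 : ℂ) ^ n / ((4 : ℂ) ^ n * (n.factorial : ℂ) *
      ∏ k ∈ Finset.range n, ((ν : ℂ) + 2 + k))) := by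
    apply Summable.comp_nat_add (k := 1)
    apply Summable.congr (Complex.summable_ofReal.mpr (summable_aa hν))
    intro n
    exact (hshift n).symm
  rw [tsum_eq_zero_add' ?hs]
  case hs =>
    apply Summable.congr (Complex.summable_ofReal.mpr (summable_aa hν))
    intro n
    exact (hshift n).symm
  have h0 : (-1 : ℂ) ^ 0 / ((4 : ℂ) ^ 0 * ((0).factorial : ℂ) *
      ∏ k ∈ Finset.range 0, ((ν : ℂ) + 2 + k)) = 1 := by simp
  rw [h0]
  rw [tsum_congr hshift, ← Complex.ofReal_tsum]
  rw [Lam_def]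
  push_cast
  ring

lemma rr_pos {ν : ℝ} (hν : -2 < ν) : 0 < (2:ℝ) ^ (ν + 1) * Real.Gamma (ν + 2) :=
  mul_pos (Real.rpow_pos_of_pos (by norm_num) _) (Real.Gamma_pos_of_pos (by linarith))

lemma besselJ_eq {ν : ℝ} (hν : -2 < ν) :
    besselJ (ν + 1) (1 : ℂ) =
      (((Lam ν) / ((2:ℝ) ^ (ν + 1) * Real.Gamma (ν + 2)) : ℝ) : ℂ) := by
  have hc : (2 : ℂ) ^ ((ν : ℂ) + 1) * Complex.Gamma ((ν : ℂ) + 2) =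
      ((((2:ℝ) ^ (ν + 1) * Real.Gamma (ν + 2)) : ℝ) : ℂ) := by
    rw [Complex.ofReal_mul, Complex.ofReal_cpow (by norm_num : (0:ℝ) ≤ 2)]
    rw [show ((ν : ℂ) + 2) = (((ν + 2 : ℝ)) : ℂ) by push_cast; ring, Complex.Gamma_ofReal]
    push_cast
    ring
  have hne : ((((2:ℝ) ^ (ν + 1) * Real.Gamma (ν + 2)) : ℝ) : ℂ) ≠ 0 := by
    exact_mod_cast (rr_pos hν).ne'
  have hid := lam_identity hν
  rw [hc] at hid
  have hj : besselJ (ν + 1) (1 : ℂ) * ((((2:ℝ) ^ (ν + 1) * Real.Gamma (ν + 2)) : ℝ) : ℂ)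
      = ((Lam ν : ℝ) : ℂ) := by rw [hid]; ring
  rw [Complex.ofReal_div, ← hj, mul_div_assoc, div_self hne, mul_one]

lemma besselJ_zero_iff {ν : ℝ} (hν : -2 < ν) :
    besselJ (ν + 1) (1 : ℂ) = 0 ↔ Lam ν = 0 := by
  rw [besselJ_eq hν]
  rw [Complex.ofReal_eq_zero, div_eq_zero_iff]
  constructor
  · rintro (h | h)
    · exact h
    · exact absurd h (rr_pos hν).ne'
  · exact Or.inl

theorem stmt17 :
    StrictMonoOn Lam (Set.Ioi (-2 : ℝ)) ∧
    (∀ ν : ℝ, -2 < ν →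
      (Lam ν : ℂ) = (2 : ℂ) ^ ((ν : ℂ) + 1) * Complex.Gamma ((ν : ℂ) + 2) *
        besselJ (ν + 1) (1 : ℂ)) ∧
    (∃! t : ℝ, -2 < t ∧ besselJ (t + 1) (1 : ℂ) = 0) ∧
    (∀ t : ℝ, -2 < t → besselJ (t + 1) (1 : ℂ) = 0 →
      ∀ ν : ℝ, t < ν → 0 < (besselJ (ν + 1) (1 : ℂ)).re) := by
  have hsub : Set.Icc (-2 + 12⁻¹ : ℝ) 0 ⊆ Set.Ioi (-2 : ℝ) := by
    intro x hx
    exact lt_of_lt_of_le (by norm_num) hx.1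
  obtain ⟨t, htmem, ht0⟩ := intermediate_value_Icc (by norm_num : (-2 + 12⁻¹ : ℝ) ≤ 0)
    (lam_continuousOn.mono hsub) (Set.mem_Icc.mpr ⟨lam_neg.le, lam_pos0.le⟩)
  have ht2 : (-2 : ℝ) < t := lt_of_lt_of_le (by norm_num) htmem.1
  refine ⟨lam_strictMonoOn, fun ν hν => lam_identity hν, ?_, ?_⟩
  · refine ⟨t, ⟨ht2, (besselJ_zero_iff ht2).mpr ht0⟩, ?_⟩
    rintro s ⟨hs2, hsJ⟩
    exact lam_strictMonoOn.injOn (Set.mem_Ioi.mpr hs2) (Set.mem_Ioi.mpr ht2)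
      (((besselJ_zero_iff hs2).mp hsJ).trans ht0.symm)
  · intro t' ht'2 ht'J ν hνt'
    have hν2 : -2 < ν := lt_trans ht'2 hνt'
    have hLt' : Lam t' = 0 := (besselJ_zero_iff ht'2).mp ht'J
    have hLν : 0 < Lam ν := by
      have := lam_strictMonoOn (Set.mem_Ioi.mpr ht'2) (Set.mem_Ioi.mpr hν2) hνt'
      linarith [hLt' ▸ this]
    rw [besselJ_eq hν2]
    rw [Complex.ofReal_re]
    exact div_pos hLν (rr_pos hν2)
end
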